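/- arXiv:1609.05270 — 4 statements merged into one kernel-verified Lean document; each statement's English description precedes it below -/
import Mathlib

section
/- In the quantum symplectic space 𝒳, for all i, j ∈ I⁺ and k ∈ I the following relations hold: Ω_i x_k = q² x_k Ω_i if −n ≤ k ≤ −i; Ω_i x_k = x_k Ω_i if −i < k < i; Ω_i x_k = q^{−2} x_k Ω_i if i ≤ k ≤ n; moreover Ω_i Ω_j = Ω_j Ω_i. -/
noncomputable section

/-- The `q`-integer `[m]_q = (q^m - q^{-m})/(q - q⁻¹)`. -/
def qnum {k : Type*} [Field k] (q : k) (m : ℤ) : k :=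
  (q ^ m - q ^ (-m)) / (q - q⁻¹)

/-- The element `Ω_i = Σ_{j=i}^{n} q^{j-i} x_{-j} x_j` (with `Ω_{n+1} = 0`). -/
def Om {k X : Type*} [Field k] [Ring X] [Algebra k X]
    (q : k) (x : ℤ → X) (n : ℕ) (i : ℤ) : X :=
  ∑ j ∈ Finset.Icc i (n : ℤ), q ^ (j - i) • (x (-j) * x j)

/-- In the quantum symplectic space (any algebra whose generators `x_i`, `i ∈ I`,
satisfy the defining relations), for all `i, j ∈ I⁺` and `k ∈ I`:
`Ω_i x_k = q² x_k Ω_i` if `-n ≤ k ≤ -i`; `Ω_i x_k = x_k Ω_i` if `-i < k < i`;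
`Ω_i x_k = q⁻² x_k Ω_i` if `i ≤ k ≤ n`; and `Ω_i Ω_j = Ω_j Ω_i`. -/
theorem stmt4 {k X : Type*} [Field k] [CharZero k] [Ring X] [Algebra k X]
    (n : ℕ) (hn : 2 ≤ n) (q : k) (hq : q ≠ 0) (hroot : ∀ r : ℕ, r ≠ 0 → q ^ r ≠ 1)
    (x : ℤ → X)
    (hrel1 : ∀ i j : ℤ, -(n : ℤ) ≤ i → j ≤ n → i ≠ 0 → j ≠ 0 → i < j → j ≠ -i →
      x j * x i = q • (x i * x j))
    (hrel2 : ∀ i : ℤ, 1 ≤ i → i ≤ n →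
      x i * x (-i) = (q ^ 2) • (x (-i) * x i) + (q ^ 2 * (q - q⁻¹)) • Om q x n (i + 1)) :
    (∀ i l : ℤ, 1 ≤ i → i ≤ n → -(n : ℤ) ≤ l → l ≤ -i →
        Om q x n i * x l = (q ^ 2) • (x l * Om q x n i)) ∧
    (∀ i l : ℤ, 1 ≤ i → i ≤ n → -i < l → l < i → l ≠ 0 →
        Om q x n i * x l = x l * Om q x n i) ∧
    (∀ i l : ℤ, 1 ≤ i → i ≤ n → i ≤ l → l ≤ n →
        Om q x n i * x l = (q ^ (-2 : ℤ)) • (x l * Om q x n i)) ∧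
    (∀ i j : ℤ, 1 ≤ i → i ≤ n → 1 ≤ j → j ≤ n →
        Om q x n i * Om q x n j = Om q x n j * Om q x n i) := by
  have hq2 : (q : k) ^ 2 ≠ 0 := pow_ne_zero _ hq
  have hqm2 : q ^ (-2 : ℤ) = (q ^ 2)⁻¹ := by rw [zpow_neg]; norm_cast
  -- the recurrence Ω_i = x₋ᵢ xᵢ + q • Ω_{i+1}
  have hrec : ∀ i : ℤ, i ≤ (n : ℤ) →
      Om q x n i = x (-i) * x i + q • Om q x n (i + 1) := by
    intro i hi
    have hins : Finset.Icc i (n : ℤ) = insert i (Finset.Icc (i + 1) (n : ℤ)) := by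
      rw [Finset.Icc_eq_cons_Ioc hi, Finset.cons_eq_insert]
      congr 1
      ext y
      simp only [Finset.mem_Ioc, Finset.mem_Icc]
      omega
    rw [Om, hins, Finset.sum_insert (by simp), sub_self, zpow_zero, one_smul]
    congr 1
    rw [Om, Finset.smul_sum]
    refine Finset.sum_congr rfl fun j hj => ?_
    rw [smul_smul]
    congr 1
    rw [← zpow_one_add₀ hq]
    congr 1
    ring
  -- moving x_l (with -j < l < j) across x₋ⱼ xⱼ
  have hmidT : ∀ j l : ℤ, 1 ≤ j → j ≤ (n : ℤ) → -j < l → l < j → l ≠ 0 →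
      (x (-j) * x j) * x l = x l * (x (-j) * x j) := by
    intro j l h1 h2 h3 h4 h5
    have e1 : x j * x l = q • (x l * x j) :=
      hrel1 l j (by omega) (by omega) h5 (by omega) h4 (by omega)
    have e2 : x l * x (-j) = q • (x (-j) * x l) :=
      hrel1 (-j) l (by omega) (by omega) (by omega) h5 h3 (by omega)
    have e2' : x (-j) * x l = q⁻¹ • (x l * x (-j)) := by
      rw [e2, smul_smul, inv_mul_cancel₀ hq, one_smul]
    calc x (-j) * x j * x l = x (-j) * (x j * x l) := by rw [mul_assoc]
      _ = q • (x (-j) * x l * x j) := by rw [e1, mul_smul_comm, mul_assoc]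
      _ = q • (q⁻¹ • (x l * x (-j) * x j)) := by rw [e2', smul_mul_assoc]
      _ = x l * (x (-j) * x j) := by
          rw [smul_smul, mul_inv_cancel₀ hq, one_smul, mul_assoc]
  -- moving x_l (with l < -j) across x₋ⱼ xⱼ
  have hTdown : ∀ j l : ℤ, 1 ≤ j → j ≤ (n : ℤ) → -(n : ℤ) ≤ l → l < -j →
      (x (-j) * x j) * x l = (q ^ 2) • (x l * (x (-j) * x j)) := by
    intro j l h1 h2 h3 h4
    have e1 : x j * x l = q • (x l * x j) :=
      hrel1 l j (by omega) (by omega) (by omega) (by omega) (by omega) (by omega)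
    have e2 : x (-j) * x l = q • (x l * x (-j)) :=
      hrel1 l (-j) (by omega) (by omega) (by omega) (by omega) (by omega) (by omega)
    calc x (-j) * x j * x l = x (-j) * (x j * x l) := by rw [mul_assoc]
      _ = q • (x (-j) * x l * x j) := by rw [e1, mul_smul_comm, mul_assoc]
      _ = q • (q • (x l * x (-j) * x j)) := by rw [e2, smul_mul_assoc]
      _ = (q ^ 2) • (x l * (x (-j) * x j)) := by
          rw [smul_smul, mul_assoc]; congr 1; ring
  -- moving x_l (with j < l ≤ n) across x₋ⱼ xⱼ
  have hTup : ∀ j l : ℤ, 1 ≤ j → j < l → l ≤ (n : ℤ) →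
      (x (-j) * x j) * x l = ((q ^ 2)⁻¹) • (x l * (x (-j) * x j)) := by
    intro j l h1 h2 h3
    have e1 : x l * x j = q • (x j * x l) :=
      hrel1 j l (by omega) (by omega) (by omega) (by omega) (by omega) (by omega)
    have e2 : x l * x (-j) = q • (x (-j) * x l) :=
      hrel1 (-j) l (by omega) (by omega) (by omega) (by omega) (by omega) (by omega)
    have e1' : x j * x l = q⁻¹ • (x l * x j) := by
      rw [e1, smul_smul, inv_mul_cancel₀ hq, one_smul]
    have e2' : x (-j) * x l = q⁻¹ • (x l * x (-j)) := by
      rw [e2, smul_smul, inv_mul_cancel₀ hq, one_smul]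
    calc x (-j) * x j * x l = x (-j) * (x j * x l) := by rw [mul_assoc]
      _ = q⁻¹ • (x (-j) * x l * x j) := by rw [e1', mul_smul_comm, mul_assoc]
      _ = q⁻¹ • (q⁻¹ • (x l * x (-j) * x j)) := by rw [e2', smul_mul_assoc]
      _ = ((q ^ 2)⁻¹) • (x l * (x (-j) * x j)) := by
          rw [smul_smul, mul_assoc]; congr 1
          rw [← mul_inv]; congr 1; ring
  -- the middle commutation for Ω_i
  have hmid : ∀ i l : ℤ, 1 ≤ i → -i < l → l < i → l ≠ 0 →
      Om q x n i * x l = x l * Om q x n i := by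
    intro i l h1 h2 h3 h4
    rw [Om, Finset.sum_mul, Finset.mul_sum]
    refine Finset.sum_congr rfl fun j hj => ?_
    rw [Finset.mem_Icc] at hj
    rw [smul_mul_assoc, mul_smul_comm,
      hmidT j l (by omega) (by omega) (by omega) (by omega) h4]
  -- the main induction (downward on i)
  have haux : ∀ d : ℕ, ∀ i : ℤ, 1 ≤ i → (n : ℤ) + 1 - i ≤ d →
      (∀ l : ℤ, -(n : ℤ) ≤ l → l ≤ -i →
        Om q x n i * x l = (q ^ 2) • (x l * Om q x n i)) ∧
      (∀ l : ℤ, i ≤ l → l ≤ (n : ℤ) →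
        Om q x n i * x l = ((q ^ 2)⁻¹) • (x l * Om q x n i)) := by
    intro d
    induction d with
    | zero =>
      intro i h1 h2
      constructor <;> intro l hl1 hl2 <;> omega
    | succ d ih =>
      intro i h1 h2
      by_cases hc : (n : ℤ) + 1 - i ≤ d
      · exact ih i h1 hc
      · have hin : i ≤ (n : ℤ) := by omega
        have hd : (n : ℤ) + 1 - (i + 1) ≤ d := by omega
        have hrec_i := hrec i hin
        have h2i := hrel2 i h1 hin
        constructor
        · intro l hl1 hl2
          rcases eq_or_lt_of_le hl2 with heq | hlt
          · -- l = -i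
            subst heq
            have hOm1 : Om q x n (i + 1) * x (-i) = x (-i) * Om q x n (i + 1) :=
              hmid (i + 1) (-i) (by omega) (by omega) (by omega) (by omega)
            rw [hrec_i, add_mul, smul_mul_assoc, hOm1, mul_assoc, h2i]
            simp only [mul_add, add_mul, smul_mul_assoc, mul_smul_comm, smul_add,
              smul_smul, mul_assoc]
            match_scalars <;> field_simp <;> ring
          · -- l < -i, use IH at i+1
            have hIH : Om q x n (i + 1) * x l = (q ^ 2) • (x l * Om q x n (i + 1)) :=
              (ih (i + 1) (by omega) hd).1 l hl1 (by omega)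
            have hT : (x (-i) * x i) * x l = (q ^ 2) • (x l * (x (-i) * x i)) :=
              hTdown i l h1 hin hl1 hlt
            rw [hrec_i, add_mul, smul_mul_assoc, hIH, hT]
            simp only [mul_add, add_mul, smul_mul_assoc, mul_smul_comm, smul_add,
              smul_smul, mul_assoc]
            match_scalars <;> field_simp <;> ring
        · intro l hl1 hl2
          rcases eq_or_lt_of_le hl1 with heq | hlt
          · -- l = i
            subst heq
            have hOm1 : Om q x n (i + 1) * x i = x i * Om q x n (i + 1) :=
              hmid (i + 1) i (by omega) (by omega) (by omega) (by omega)
            have e : x (-i) * x i = ((q ^ 2)⁻¹) • (x i * x (-i))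
                - (q - q⁻¹) • Om q x n (i + 1) := by
              rw [h2i]
              match_scalars <;> field_simp <;> ring
            calc Om q x n i * x i
                = (x (-i) * x i) * x i + q • (Om q x n (i + 1) * x i) := by
                  rw [hrec_i, add_mul, smul_mul_assoc]
              _ = (((q ^ 2)⁻¹) • (x i * x (-i))
                    - (q - q⁻¹) • Om q x n (i + 1)) * x i
                    + q • (x i * Om q x n (i + 1)) := by rw [e, hOm1]
              _ = ((q ^ 2)⁻¹) • (x i * (x (-i) * x i))
                    - (q - q⁻¹) • (Om q x n (i + 1) * x i)
                    + q • (x i * Om q x n (i + 1)) := by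
                  rw [sub_mul, smul_mul_assoc, smul_mul_assoc, mul_assoc]
              _ = ((q ^ 2)⁻¹) • (x i * (x (-i) * x i))
                    - (q - q⁻¹) • (x i * Om q x n (i + 1))
                    + q • (x i * Om q x n (i + 1)) := by rw [hOm1]
              _ = ((q ^ 2)⁻¹) • (x i * Om q x n i) := by
                  rw [hrec_i]
                  simp only [mul_add, mul_smul_comm, smul_add, smul_smul]
                  match_scalars <;> field_simp <;> ring
          · -- i < l, use IH at i+1
            have hIH : Om q x n (i + 1) * x l = ((q ^ 2)⁻¹) • (x l * Om q x n (i + 1)) :=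
              (ih (i + 1) (by omega) hd).2 l (by omega) hl2
            have hT : (x (-i) * x i) * x l = ((q ^ 2)⁻¹) • (x l * (x (-i) * x i)) :=
              hTup i l h1 hlt hl2
            rw [hrec_i, add_mul, smul_mul_assoc, hIH, hT]
            simp only [mul_add, add_mul, smul_mul_assoc, mul_smul_comm, smul_add,
              smul_smul, mul_assoc]
            match_scalars <;> field_simp <;> ring
  have hauxI : ∀ i : ℤ, 1 ≤ i →
      (∀ l : ℤ, -(n : ℤ) ≤ l → l ≤ -i →
        Om q x n i * x l = (q ^ 2) • (x l * Om q x n i)) ∧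
      (∀ l : ℤ, i ≤ l → l ≤ (n : ℤ) →
        Om q x n i * x l = ((q ^ 2)⁻¹) • (x l * Om q x n i)) := by
    intro i h1
    exact haux (n + 1) i h1 (by push_cast; omega)
  -- commutation of the Ω's (for i ≤ j)
  have hcomm : ∀ i j : ℤ, 1 ≤ i → i ≤ j → j ≤ (n : ℤ) →
      Om q x n i * Om q x n j = Om q x n j * Om q x n i := by
    intro i j h1 h2 h3
    have expand : Om q x n j = ∑ m ∈ Finset.Icc j (n : ℤ), q ^ (m - j) • (x (-m) * x m) := rfl
    rw [expand, Finset.mul_sum, Finset.sum_mul]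
    refine Finset.sum_congr rfl fun m hm => ?_
    rw [Finset.mem_Icc] at hm
    rw [mul_smul_comm, smul_mul_assoc]
    congr 1
    have e1 : Om q x n i * x (-m) = (q ^ 2) • (x (-m) * Om q x n i) :=
      (hauxI i h1).1 (-m) (by omega) (by omega)
    have e2 : Om q x n i * x m = ((q ^ 2)⁻¹) • (x m * Om q x n i) :=
      (hauxI i h1).2 m (by omega) (by omega)
    calc Om q x n i * (x (-m) * x m) = (Om q x n i * x (-m)) * x m := by rw [mul_assoc]
      _ = (q ^ 2) • (x (-m) * (Om q x n i * x m)) := by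
          rw [e1, smul_mul_assoc, mul_assoc]
      _ = (q ^ 2) • (((q ^ 2)⁻¹) • (x (-m) * (x m * Om q x n i))) := by
          rw [e2, mul_smul_comm]
      _ = x (-m) * x m * Om q x n i := by
          rw [smul_smul, mul_inv_cancel₀ hq2, one_smul, mul_assoc]
  refine ⟨fun i l h1 h2 h3 h4 => (hauxI i h1).1 l h3 h4,
    fun i l h1 h2 h3 h4 h5 => hmid i l h1 h3 h4 h5,
    fun i l h1 h2 h3 h4 => by rw [hqm2]; exact (hauxI i h1).2 l h3 h4,
    fun i j h1 h2 h3 h4 => ?_⟩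
  rcases le_total i j with h | h
  · exact hcomm i j h1 h h4
  · exact (hcomm j i h3 h h2).symm
end
end

section
/- In the quantum symplectic space 𝒳, for every i ∈ I⁺ and every integer m ≥ 1: x_i x_{−i}^m = q^{2m} x_{−i}^m x_i + q^{m+1} λ [m]_q Ω_{i+1} x_{−i}^{m−1} and x_i^m x_{−i} = q^{2m} x_{−i} x_i^m + q^{m+1} λ [m]_q Ω_{i+1} x_i^{m−1}. -/
noncomputable section

/-- In the quantum symplectic space, for `i ∈ I⁺` and `m ≥ 1`:
`x_i x_{-i}^m = q^{2m} x_{-i}^m x_i + q^{m+1} λ [m]_q Ω_{i+1} x_{-i}^{m-1}` and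
`x_i^m x_{-i} = q^{2m} x_{-i} x_i^m + q^{m+1} λ [m]_q Ω_{i+1} x_i^{m-1}`. -/
theorem stmt5 {k X : Type*} [Field k] [CharZero k] [Ring X] [Algebra k X]
    (n : ℕ) (hn : 2 ≤ n) (q : k) (hq : q ≠ 0) (hroot : ∀ r : ℕ, r ≠ 0 → q ^ r ≠ 1)
    (x : ℤ → X)
    (hrel1 : ∀ i j : ℤ, -(n : ℤ) ≤ i → j ≤ n → i ≠ 0 → j ≠ 0 → i < j → j ≠ -i →
      x j * x i = q • (x i * x j))
    (hrel2 : ∀ i : ℤ, 1 ≤ i → i ≤ n →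
      x i * x (-i) = (q ^ 2) • (x (-i) * x i) + (q ^ 2 * (q - q⁻¹)) • Om q x n (i + 1)) :
    ∀ i : ℤ, 1 ≤ i → i ≤ n → ∀ m : ℕ, 1 ≤ m →
      x i * x (-i) ^ m
        = (q ^ (2 * m)) • (x (-i) ^ m * x i)
          + (q ^ (m + 1) * (q - q⁻¹) * qnum q m) • (Om q x n (i + 1) * x (-i) ^ (m - 1)) ∧
      x i ^ m * x (-i)
        = (q ^ (2 * m)) • (x (-i) * x i ^ m)
          + (q ^ (m + 1) * (q - q⁻¹) * qnum q m) • (Om q x n (i + 1) * x i ^ (m - 1)) := by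
  have h2 : q ^ 2 ≠ 1 := hroot 2 (by norm_num)
  have hlam : q - q⁻¹ ≠ 0 := by
    intro h
    apply h2
    have hqq : q = q⁻¹ := sub_eq_zero.mp h
    calc q ^ 2 = q * q := sq q
      _ = q * q⁻¹ := by rw [← hqq]
      _ = 1 := mul_inv_cancel₀ hq
  have hζ : ∀ m : ℕ, (q - q⁻¹) * qnum q m = q ^ m - (q ^ m)⁻¹ := by
    intro m
    rw [qnum, mul_div_cancel₀ _ hlam, zpow_natCast, ← zpow_natCast q m, ← zpow_neg, zpow_neg,
      zpow_natCast]
  have hq1 : qnum q 1 = 1 := by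
    have h := hζ 1
    rw [Nat.cast_one, pow_one] at h
    exact mul_left_cancel₀ hlam (by rw [h, mul_one])
  have hsc : ∀ m : ℕ, q ^ (2 * m) * (q ^ 2 * (q - q⁻¹)) + q ^ (m + 1) * (q - q⁻¹) * qnum q m
      = q ^ (m + 1 + 1) * (q - q⁻¹) * qnum q ((m : ℤ) + 1) := by
    intro m
    have h1 := hζ m
    have h2' := hζ (m + 1)
    rw [Nat.cast_add, Nat.cast_one] at h2'
    calc q ^ (2 * m) * (q ^ 2 * (q - q⁻¹)) + q ^ (m + 1) * (q - q⁻¹) * qnum q m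
        = q ^ (2 * m) * q ^ 2 * (q - q⁻¹) + q ^ (m + 1) * ((q - q⁻¹) * qnum q m) := by ring
      _ = q ^ (2 * m) * q ^ 2 * (q - q⁻¹) + q ^ (m + 1) * (q ^ m - (q ^ m)⁻¹) := by rw [h1]
      _ = q ^ (m + 1 + 1) * (q ^ (m + 1) - (q ^ (m + 1))⁻¹) := by
          field_simp
          ring
      _ = q ^ (m + 1 + 1) * ((q - q⁻¹) * qnum q ((m : ℤ) + 1)) := by rw [h2']
      _ = q ^ (m + 1 + 1) * (q - q⁻¹) * qnum q ((m : ℤ) + 1) := by ring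
  intro i hi1 hin
  have keyn : ∀ j : ℤ, i + 1 ≤ j → j ≤ n → (x (-j) * x j) * x (-i) = x (-i) * (x (-j) * x j) := by
    intro j h1 h2
    have e1 : x (-i) * x (-j) = q • (x (-j) * x (-i)) :=
      hrel1 (-j) (-i) (by omega) (by omega) (by omega) (by omega) (by omega) (by omega)
    have e2 : x j * x (-i) = q • (x (-i) * x j) :=
      hrel1 (-i) j (by omega) h2 (by omega) (by omega) (by omega) (by omega)
    have e1' : x (-j) * x (-i) = q⁻¹ • (x (-i) * x (-j)) := by
      rw [e1, smul_smul, inv_mul_cancel₀ hq, one_smul]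
    calc x (-j) * x j * x (-i) = x (-j) * (q • (x (-i) * x j)) := by rw [mul_assoc, e2]
      _ = q • (x (-j) * x (-i) * x j) := by rw [mul_smul_comm, mul_assoc]
      _ = q • (q⁻¹ • (x (-i) * x (-j)) * x j) := by rw [e1']
      _ = x (-i) * (x (-j) * x j) := by
          rw [smul_mul_assoc, smul_smul, mul_inv_cancel₀ hq, one_smul, mul_assoc]
  have keyp : ∀ j : ℤ, i + 1 ≤ j → j ≤ n → (x (-j) * x j) * x i = x i * (x (-j) * x j) := by
    intro j h1 h2
    have e1 : x i * x (-j) = q • (x (-j) * x i) :=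
      hrel1 (-j) i (by omega) hin (by omega) (by omega) (by omega) (by omega)
    have e2 : x j * x i = q • (x i * x j) :=
      hrel1 i j (by omega) h2 (by omega) (by omega) (by omega) (by omega)
    have e2' : x i * x j = q⁻¹ • (x j * x i) := by
      rw [e2, smul_smul, inv_mul_cancel₀ hq, one_smul]
    symm
    calc x i * (x (-j) * x j) = q • (x (-j) * x i) * x j := by rw [← mul_assoc, e1]
      _ = q • (x (-j) * (q⁻¹ • (x j * x i))) := by rw [smul_mul_assoc, mul_assoc, e2']
      _ = x (-j) * x j * x i := by
          rw [mul_smul_comm, smul_smul, mul_inv_cancel₀ hq, one_smul, ← mul_assoc]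
  have comn : Commute (Om q x n (i + 1)) (x (-i)) := by
    show _ = _
    rw [Om, Finset.sum_mul, Finset.mul_sum]
    refine Finset.sum_congr rfl fun j hj => ?_
    rw [Finset.mem_Icc] at hj
    rw [smul_mul_assoc, mul_smul_comm, keyn j hj.1 hj.2]
  have comp : Commute (Om q x n (i + 1)) (x i) := by
    show _ = _
    rw [Om, Finset.sum_mul, Finset.mul_sum]
    refine Finset.sum_congr rfl fun j hj => ?_
    rw [Finset.mem_Icc] at hj
    rw [smul_mul_assoc, mul_smul_comm, keyp j hj.1 hj.2]
  intro m hm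
  induction m, hm using Nat.le_induction with
  | base =>
    constructor
    · simpa [hq1] using hrel2 i hi1 hin
    · simpa [hq1] using hrel2 i hi1 hin
  | succ m hm ih =>
    obtain ⟨ih1, ih2⟩ := ih
    have hm1 : m - 1 + 1 = m := Nat.succ_pred_eq_of_pos hm
    have hr2 := hrel2 i hi1 hin
    have hOn : x (-i) ^ m * Om q x n (i + 1) = Om q x n (i + 1) * x (-i) ^ m :=
      ((comn.pow_right m).symm).eq
    have hOn2 : Om q x n (i + 1) * x (-i) ^ (m - 1) * x (-i) = Om q x n (i + 1) * x (-i) ^ m := by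
      rw [mul_assoc, ← pow_succ, hm1]
    have hOp : x i * (Om q x n (i + 1) * x i ^ (m - 1)) = Om q x n (i + 1) * x i ^ m := by
      rw [← mul_assoc, ← comp.eq, mul_assoc, ← pow_succ', hm1]
    constructor
    · calc x i * x (-i) ^ (m + 1) = (x i * x (-i) ^ m) * x (-i) := by
            rw [mul_assoc, ← pow_succ]
        _ = (q ^ (2 * m)) • (x (-i) ^ m * (x i * x (-i)))
            + (q ^ (m + 1) * (q - q⁻¹) * qnum q m) • (Om q x n (i + 1) * x (-i) ^ m) := by
            rw [ih1, add_mul, smul_mul_assoc, smul_mul_assoc, hOn2, mul_assoc (x (-i) ^ m)]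
        _ = (q ^ (2 * m) * q ^ 2) • (x (-i) ^ (m + 1) * x i)
            + ((q ^ (2 * m) * (q ^ 2 * (q - q⁻¹))) • (Om q x n (i + 1) * x (-i) ^ m)
            + (q ^ (m + 1) * (q - q⁻¹) * qnum q m) • (Om q x n (i + 1) * x (-i) ^ m)) := by
            rw [hr2, mul_add, mul_smul_comm, mul_smul_comm, smul_add, smul_smul, smul_smul,
              ← mul_assoc (x (-i) ^ m), ← pow_succ, hOn, add_assoc]
        _ = _ := by
            simp only [Nat.add_sub_cancel]
            match_scalars
            · ring
            · linear_combination hsc m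
    · calc x i ^ (m + 1) * x (-i) = x i * (x i ^ m * x (-i)) := by
            rw [← mul_assoc, ← pow_succ']
        _ = (q ^ (2 * m)) • ((x i * x (-i)) * x i ^ m)
            + (q ^ (m + 1) * (q - q⁻¹) * qnum q m) • (Om q x n (i + 1) * x i ^ m) := by
            rw [ih2, mul_add, mul_smul_comm, mul_smul_comm, hOp, ← mul_assoc]
        _ = (q ^ (2 * m) * q ^ 2) • (x (-i) * x i ^ (m + 1))
            + ((q ^ (2 * m) * (q ^ 2 * (q - q⁻¹))) • (Om q x n (i + 1) * x i ^ m)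
            + (q ^ (m + 1) * (q - q⁻¹) * qnum q m) • (Om q x n (i + 1) * x i ^ m)) := by
            rw [hr2, add_mul, smul_mul_assoc, smul_mul_assoc, smul_add, smul_smul, smul_smul,
              mul_assoc (x (-i)), ← pow_succ', add_assoc]
        _ = _ := by
            simp only [Nat.add_sub_cancel]
            match_scalars
            · ring
            · linear_combination hsc m
end
end

section
/- In the quantum symplectic space 𝒳, for every i ∈ I⁺ and every a ∈ ℕ^{2n}: (i) x_{−i} x^a = (∏_{j=−n}^{−i−1} q^{a_j}) x^{a+ε_{−i}}; (ii) x^a x_i = (∏_{j=i+1}^{n} q^{a_j}) x^{a+ε_i}; (iii) x_i x^a = (∏_{j=−n}^{i−1} q^{a_j}) q^{a_{−i}} x^{a+ε_i} + (∏_{j=−n}^{−i−1} q^{−a_j}) q^{a_{−i}+1} λ [a_{−i}]_q Ω_{i+1} x^{a−ε_{−i}}; (iv) x^a x_{−i} = (∏_{j=1−i}^{n} q^{a_j}) q^{a_i} x^{a+ε_{−i}} + (∏_{k=i}^{n} q^{a_k})(∏_{j=−n}^{−i−1} q^{−2a_j}) q λ [a_i]_q Ω_{i+1} x^{a−ε_i}.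 (In (iii) and (iv) the coefficient [a_{−i}]_q, resp. [a_i]_q, vanishes when the corresponding entry of a is 0, so the terms with shifted exponent a−ε are well defined.) -/
noncomputable section

/-- The increasing list of indices `-n, …, -1, 1, …, n`. -/
def idxList (n : ℕ) : List ℤ :=
  ((List.range (2 * n + 1)).map (fun t => (t : ℤ) - n)).filter (fun i => i != 0)

/-- The normal monomial `x^a = x_{-n}^{a_{-n}} ⋯ x_n^{a_n}`. -/
def mono {X : Type*} [Monoid X] (x : ℤ → X) (n : ℕ) (a : ℤ → ℕ) : X :=
  ((idxList n).map (fun i => x i ^ a i)).prod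


namespace QSAux


/-! ### generic q-commutation lemmas -/

variable {k X : Type*} [Field k] [Ring X] [Algebra k X]

lemma qc_pow_left {y z : X} {c : k} (h : y * z = c • (z * y)) (m : ℕ) :
    y * z ^ m = (c ^ m) • (z ^ m * y) := by
  induction m with
  | zero => simp
  | succ m ih =>
    rw [pow_succ, ← mul_assoc, ih, smul_mul_assoc, mul_assoc, h, mul_smul_comm,
      smul_smul, ← mul_assoc, ← pow_succ, pow_succ c]

lemma qc_pow_right {y z : X} {c : k} (h : y * z = c • (z * y)) (m : ℕ) :
    y ^ m * z = (c ^ m) • (z * y ^ m) := by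
  induction m with
  | zero => simp
  | succ m ih =>
    rw [pow_succ', mul_assoc, ih, mul_smul_comm, ← mul_assoc, h, smul_mul_assoc,
      smul_smul, mul_assoc, ← pow_succ', pow_succ c]

lemma qc_list {y : X} (f : ℤ → X) (g : ℤ → k) (l : List ℤ)
    (h : ∀ j ∈ l, y * f j = g j • (f j * y)) :
    y * (l.map f).prod = (l.map g).prod • ((l.map f).prod * y) := by
  induction l with
  | nil => simp
  | cons j l ih =>
    simp only [List.map_cons, List.prod_cons]
    rw [← mul_assoc, h j (by simp), smul_mul_assoc, mul_assoc,
      ih (fun j hj => h j (by simp [hj])), mul_smul_comm, smul_smul, ← mul_assoc]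

lemma qc_list' {y : X} (f : ℤ → X) (g : ℤ → k) (l : List ℤ)
    (h : ∀ j ∈ l, f j * y = g j • (y * f j)) :
    (l.map f).prod * y = (l.map g).prod • (y * (l.map f).prod) := by
  induction l with
  | nil => simp
  | cons j l ih =>
    simp only [List.map_cons, List.prod_cons]
    rw [mul_assoc, ih (fun j hj => h j (by simp [hj])), mul_smul_comm, ← mul_assoc,
      h j (by simp), smul_mul_assoc, smul_smul, mul_assoc, mul_comm ((List.map g l).prod) (g j)]


def seg (c : ℤ) (m : ℕ) : List ℤ := (List.range m).map (fun t : ℕ => c + (t : ℤ))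
lemma mem_seg {c : ℤ} {m : ℕ} {j : ℤ} : j ∈ seg c m ↔ c ≤ j ∧ j < c + m := by
  simp only [seg, List.mem_map, List.mem_range]
  constructor
  · rintro ⟨t, ht, rfl⟩; omega
  · rintro ⟨h1, h2⟩; exact ⟨(j - c).toNat, by omega, by omega⟩
lemma seg_append (c : ℤ) (m₁ m₂ : ℕ) :
    seg c (m₁ + m₂) = seg c m₁ ++ seg (c + m₁) m₂ := by
  simp only [seg, List.range_add, List.map_append, List.map_map]
  congr 1
  apply List.map_congr_left
  intro t _
  simp; ring
lemma seg_one (c : ℤ) : seg c 1 = [c] := by simp [seg, List.range_succ]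

lemma seg_filter_ne (c : ℤ) (m : ℕ) (h : 0 < c ∨ c + m ≤ 0) :
    (seg c m).filter (fun i => i != 0) = seg c m := by
  apply List.filter_eq_self.mpr
  intro j hj
  rw [mem_seg] at hj
  simp only [bne_iff_ne, ne_eq, decide_eq_true_eq]
  omega

lemma seg_map_prod {M : Type*} [CommMonoid M] (g : ℤ → M) (c : ℤ) (m : ℕ) :
    ((seg c m).map g).prod = ∏ j ∈ Finset.Icc c (c + m - 1), g j := by
  induction m generalizing c with
  | zero =>
    simp only [seg, List.range_zero, List.map_nil, List.prod_nil]
    rw [Finset.Icc_eq_empty (by omega), Finset.prod_empty]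
  | succ m ih =>
    rw [show m + 1 = 1 + m by omega, seg_append, seg_one, List.map_append, List.prod_append,
      ih, List.map_singleton, List.prod_singleton]
    rw [show (c + ((1 + m : ℕ) : ℤ) - 1) = c + 1 + (m : ℤ) - 1 from by push_cast; ring,
      show Finset.Icc c (c + 1 + (m : ℤ) - 1) = insert c (Finset.Icc (c + 1) (c + 1 + (m : ℤ) - 1)) from by
        ext j; simp only [Finset.mem_Icc, Finset.mem_insert]; omega,
      Finset.prod_insert (by simp [Finset.mem_Icc])]
    norm_num

lemma prod_Icc_split {M : Type*} [CommMonoid M] (g : ℤ → M) {c e d : ℤ}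
    (h1 : c ≤ e + 1) (h2 : e ≤ d) :
    (∏ j ∈ Finset.Icc c d, g j)
      = (∏ j ∈ Finset.Icc c e, g j) * ∏ j ∈ Finset.Icc (e + 1) d, g j := by
  rw [← Finset.prod_union (by
    simp only [Finset.disjoint_left, Finset.mem_Icc]; intro j hj hj2; omega)]
  congr 1
  ext j; simp only [Finset.mem_Icc, Finset.mem_union]; omega


lemma idx_split (n iN : ℕ) (h1 : 1 ≤ iN) (h2 : iN ≤ n) :
    idxList n = seg (-(n:ℤ)) (n - iN) ++ ([-(iN:ℤ)] ++ (seg (1 - (iN:ℤ)) (iN - 1)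
      ++ (seg 1 (iN - 1) ++ ([(iN:ℤ)] ++ seg ((iN:ℤ) + 1) (n - iN))))) := by
  have hmap : idxList n = (seg (-(n:ℤ)) (2*n+1)).filter (fun i => i != 0) := by
    unfold idxList seg
    congr 1
    rw [List.bind_eq_flatMap]
    simp only [List.pure_def]
    rw [show ((List.range (2*n+1)).flatMap fun a : ℕ => [(a:ℤ)])
        = (List.range (2*n+1)).map (fun a : ℕ => (a:ℤ)) from by
      induction List.range (2*n+1) with
      | nil => rfl
      | cons h t ih => simp [List.flatMap_cons, ih]]
    rw [List.map_map]
    apply List.map_congr_left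
    intro t _
    simp only [Function.comp_apply]
    ring
  rw [hmap, show 2*n+1 = (n - iN) + (1 + ((iN-1) + (1 + ((iN-1) + (1 + (n - iN)))))) from by omega]
  rw [seg_append, seg_append, seg_append, seg_append, seg_append, seg_append]
  rw [show -(n:ℤ) + ((n - iN : ℕ):ℤ) = -(iN:ℤ) from by push_cast; omega]
  rw [show -(iN:ℤ) + ((1:ℕ):ℤ) = 1 - (iN:ℤ) from by push_cast; omega]
  rw [show 1 - (iN:ℤ) + ((iN - 1 : ℕ):ℤ) = 0 from by push_cast [h1]; omega]
  rw [show (0:ℤ) + ((1:ℕ):ℤ) = 1 from by norm_num]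
  rw [show (1:ℤ) + ((iN - 1 : ℕ):ℤ) = (iN:ℤ) from by push_cast [h1]; omega]
  rw [show (iN:ℤ) + ((1:ℕ):ℤ) = (iN:ℤ) + 1 from by norm_num]
  rw [seg_one, seg_one, seg_one]
  simp only [List.filter_append]
  rw [seg_filter_ne _ _ (by omega), seg_filter_ne _ _ (by right; push_cast [h1]; omega),
    seg_filter_ne _ _ (by left; omega), seg_filter_ne _ _ (by left; omega)]
  have h3 : ((-(iN:ℤ)) != 0) = true := by simp; omega
  have h4 : (((iN:ℤ)) != 0) = true := by simp; omega
  have h5 : (((0:ℤ)) != 0) = false := by simp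
  simp only [List.filter_cons, h3, h4, h5, List.filter_nil, if_true, if_false, cond_true, cond_false]
  simp

variable {k X : Type*} [Field k] [Ring X] [Algebra k X]


lemma Om_succ (q : k) (hq : q ≠ 0) (x : ℤ → X) (n : ℕ) {s : ℤ} (hs : s ≤ n) :
    Om q x n s = x (-s) * x s + q • Om q x n (s + 1) := by
  unfold Om
  rw [show Finset.Icc s (n:ℤ) = insert s (Finset.Icc (s+1) (n:ℤ)) from by
      ext j; simp only [Finset.mem_Icc, Finset.mem_insert]; omega,
    Finset.sum_insert (by simp [Finset.mem_Icc])]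
  rw [sub_self, zpow_zero, one_smul, Finset.smul_sum]
  congr 1
  apply Finset.sum_congr rfl
  intro j hj
  rw [smul_smul, show j - s = 1 + (j - (s+1)) from by ring, zpow_add₀ hq, zpow_one]

lemma Om_comm_small (q : k) (hq : q ≠ 0) (x : ℤ → X) (n : ℕ)
    (hrel1 : ∀ i j : ℤ, -(n : ℤ) ≤ i → j ≤ n → i ≠ 0 → j ≠ 0 → i < j → j ≠ -i →
      x j * x i = q • (x i * x j))
    {i j : ℤ} (hi0 : 1 ≤ i) (hin : i ≤ n) (hj0 : j ≠ 0) (hj1 : -i ≤ j) (hj2 : j ≤ i) :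
    Om q x n (i + 1) * x j = x j * Om q x n (i + 1) := by
  unfold Om
  rw [Finset.sum_mul, Finset.mul_sum]
  apply Finset.sum_congr rfl
  intro l hl
  rw [Finset.mem_Icc] at hl
  have e1 : x l * x j = q • (x j * x l) :=
    hrel1 j l (by omega) (by omega) hj0 (by omega) (by omega) (by omega)
  have e2 : x j * x (-l) = q • (x (-l) * x j) :=
    hrel1 (-l) j (by omega) (by omega) (by omega) hj0 (by omega) (by omega)
  have e2' : x (-l) * x j = q⁻¹ • (x j * x (-l)) := by
    rw [e2, smul_smul, inv_mul_cancel₀ hq, one_smul]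
  rw [smul_mul_assoc, mul_smul_comm]
  congr 1
  rw [mul_assoc, e1, mul_smul_comm, ← mul_assoc, e2', smul_mul_assoc, smul_smul,
    mul_inv_cancel₀ hq, one_smul, mul_assoc]

lemma Om_comm_big (q : k) (hq : q ≠ 0) (x : ℤ → X) (n : ℕ)
    (hrel1 : ∀ i j : ℤ, -(n : ℤ) ≤ i → j ≤ n → i ≠ 0 → j ≠ 0 → i < j → j ≠ -i →
      x j * x i = q • (x i * x j))
    (hrel2 : ∀ i : ℤ, 1 ≤ i → i ≤ n →
      x i * x (-i) = (q ^ 2) • (x (-i) * x i) + (q ^ 2 * (q - q⁻¹)) • Om q x n (i + 1))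
    {s m : ℤ} (hs : 1 ≤ s) (hsm : s ≤ m) (hmn : m ≤ n) :
    Om q x n s * x (-m) = (q ^ 2) • (x (-m) * Om q x n s) := by
  have key : ∀ t : ℕ, ∀ s m : ℤ, (n:ℤ) + 1 - s ≤ t → 1 ≤ s → s ≤ m → m ≤ n →
      Om q x n s * x (-m) = (q ^ 2) • (x (-m) * Om q x n s) := by
    intro t
    induction t with
    | zero => intro s m h hs hsm hmn; omega
    | succ t ih =>
      intro s m h hs hsm hmn
      rcases le_or_gt ((n:ℤ) + 1 - s) t with h' | h'
      · exact ih s m h' hs hsm hmn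
      have hsn : s ≤ (n:ℤ) := le_trans hsm hmn
      rcases eq_or_lt_of_le hsm with rfl | hlt
      · -- m = s
        have hA := hrel2 s hs hsn
        have hB : Om q x n (s+1) * x (-s) = x (-s) * Om q x n (s+1) :=
          Om_comm_small q hq x n hrel1 hs hsn (by omega) (by omega) (by omega)
        rw [Om_succ q hq x n hsn]
        rw [add_mul, smul_mul_assoc, mul_assoc, hA, hB]
        simp only [mul_add, add_mul, smul_add, mul_smul_comm, smul_mul_assoc, smul_smul, mul_assoc]
        match_scalars <;> field_simp <;> ring
      · -- m > s
        have e1 : x s * x (-m) = q • (x (-m) * x s) :=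
          hrel1 (-m) s (by omega) (by omega) (by omega) (by omega) (by omega) (by omega)
        have e2 : x (-s) * x (-m) = q • (x (-m) * x (-s)) :=
          hrel1 (-m) (-s) (by omega) (by omega) (by omega) (by omega) (by omega) (by omega)
        have e3 : Om q x n (s+1) * x (-m) = (q ^ 2) • (x (-m) * Om q x n (s+1)) :=
          ih (s+1) m (by omega) (by omega) (by omega) hmn
        rw [Om_succ q hq x n hsn]
        rw [add_mul, smul_mul_assoc, mul_assoc, e1, mul_smul_comm, ← mul_assoc, e2, e3]
        simp only [mul_add, add_mul, smul_add, mul_smul_comm, smul_mul_assoc, smul_smul, mul_assoc]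
        match_scalars <;> field_simp <;> ring
  exact key ((n:ℤ) + 1 - s).toNat s m (by omega) hs hsm hmn

lemma qnum_zero (q : k) : qnum q 0 = 0 := by simp [qnum]

lemma lambda_qnum (q : k) (hl : q - q⁻¹ ≠ 0) (m : ℕ) :
    (q - q⁻¹) * qnum q (m : ℤ) = q ^ m - (q⁻¹) ^ m := by
  rw [qnum, mul_comm, div_mul_cancel₀ _ hl, zpow_natCast, zpow_neg, ← inv_zpow, zpow_natCast]

lemma xpow_rel (q : k) (hq : q ≠ 0) (x : ℤ → X) (n : ℕ)
    (hrel1 : ∀ i j : ℤ, -(n : ℤ) ≤ i → j ≤ n → i ≠ 0 → j ≠ 0 → i < j → j ≠ -i →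
      x j * x i = q • (x i * x j))
    (hrel2 : ∀ i : ℤ, 1 ≤ i → i ≤ n →
      x i * x (-i) = (q ^ 2) • (x (-i) * x i) + (q ^ 2 * (q - q⁻¹)) • Om q x n (i + 1))
    {i : ℤ} (hi0 : 1 ≤ i) (hin : i ≤ n) : ∀ m : ℕ,
    x i * x (-i) ^ (m + 1)
      = (q ^ (2 * (m + 1))) • (x (-i) ^ (m + 1) * x i)
        + (q ^ (m + 2) * (q ^ (m + 1) - (q⁻¹) ^ (m + 1))) • (Om q x n (i + 1) * x (-i) ^ m) := by
  have hOm : ∀ r : ℕ, x (-i) ^ r * Om q x n (i+1) = Om q x n (i+1) * x (-i) ^ r := by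
    intro r
    have h : Commute (Om q x n (i+1)) (x (-i)) :=
      Om_comm_small q hq x n hrel1 hi0 hin (by omega) (by omega) (by omega)
    exact (h.pow_right r).eq.symm
  intro m
  induction m with
  | zero =>
    simpa [pow_one, mul_comm] using hrel2 i hi0 hin
  | succ m ih =>
    calc x i * x (-i) ^ (m + 1 + 1)
        = (x i * x (-i) ^ (m + 1)) * x (-i) := by rw [pow_succ, ← mul_assoc]
      _ = (q ^ (2 * (m + 1))) • (x (-i) ^ (m + 1) * (x i * x (-i)))
            + (q ^ (m + 2) * (q ^ (m + 1) - (q⁻¹) ^ (m + 1))) • (Om q x n (i + 1) * x (-i) ^ (m + 1)) := by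
          rw [ih, add_mul, smul_mul_assoc, smul_mul_assoc, mul_assoc, mul_assoc, ← pow_succ]
      _ = (q ^ (2 * (m + 1))) • (x (-i) ^ (m + 1) * ((q ^ 2) • (x (-i) * x i)
              + (q ^ 2 * (q - q⁻¹)) • Om q x n (i + 1)))
            + (q ^ (m + 2) * (q ^ (m + 1) - (q⁻¹) ^ (m + 1))) • (Om q x n (i + 1) * x (-i) ^ (m + 1)) := by
          rw [hrel2 i hi0 hin]
      _ = (q ^ (2 * (m + 1 + 1))) • (x (-i) ^ (m + 1 + 1) * x i)
            + (q ^ (m + 1 + 2) * (q ^ (m + 1 + 1) - (q⁻¹) ^ (m + 1 + 1))) • (Om q x n (i + 1) * x (-i) ^ (m + 1)) := by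
          rw [mul_add (x (-i) ^ (m+1)), mul_smul_comm, mul_smul_comm, ← mul_assoc, ← pow_succ, hOm (m+1)]
          simp only [smul_add, smul_smul, inv_pow]
          match_scalars <;> field_simp <;> ring

lemma xpow_rel' (q : k) (hq : q ≠ 0) (x : ℤ → X) (n : ℕ)
    (hrel1 : ∀ i j : ℤ, -(n : ℤ) ≤ i → j ≤ n → i ≠ 0 → j ≠ 0 → i < j → j ≠ -i →
      x j * x i = q • (x i * x j))
    (hrel2 : ∀ i : ℤ, 1 ≤ i → i ≤ n →
      x i * x (-i) = (q ^ 2) • (x (-i) * x i) + (q ^ 2 * (q - q⁻¹)) • Om q x n (i + 1))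
    {i : ℤ} (hi0 : 1 ≤ i) (hin : i ≤ n) : ∀ m : ℕ,
    x i ^ (m + 1) * x (-i)
      = (q ^ (2 * (m + 1))) • (x (-i) * x i ^ (m + 1))
        + (q ^ (m + 2) * (q ^ (m + 1) - (q⁻¹) ^ (m + 1))) • (Om q x n (i + 1) * x i ^ m) := by
  have hOm : ∀ r : ℕ, x i ^ r * Om q x n (i+1) = Om q x n (i+1) * x i ^ r := by
    intro r
    have h : Commute (Om q x n (i+1)) (x i) :=
      Om_comm_small q hq x n hrel1 hi0 hin (by omega) (by omega) (by omega)
    exact (h.pow_right r).eq.symm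
  intro m
  induction m with
  | zero =>
    simpa [pow_one, mul_comm] using hrel2 i hi0 hin
  | succ m ih =>
    calc x i ^ (m + 1 + 1) * x (-i)
        = x i * (x i ^ (m + 1) * x (-i)) := by rw [pow_succ', mul_assoc]
      _ = (q ^ (2 * (m + 1))) • ((x i * x (-i)) * x i ^ (m + 1))
            + (q ^ (m + 2) * (q ^ (m + 1) - (q⁻¹) ^ (m + 1))) • (Om q x n (i + 1) * x i ^ (m + 1)) := by
          have hOm1 : x i * Om q x n (i+1) = Om q x n (i+1) * x i := by simpa using hOm 1
          rw [ih, mul_add (x i), mul_smul_comm, mul_smul_comm, ← mul_assoc (x i) (Om q x n (i+1)),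
            hOm1, mul_assoc (Om q x n (i+1)), ← pow_succ', ← mul_assoc (x i) (x (-i))]
      _ = (q ^ (2 * (m + 1))) • (((q ^ 2) • (x (-i) * x i)
              + (q ^ 2 * (q - q⁻¹)) • Om q x n (i + 1)) * x i ^ (m + 1))
            + (q ^ (m + 2) * (q ^ (m + 1) - (q⁻¹) ^ (m + 1))) • (Om q x n (i + 1) * x i ^ (m + 1)) := by
          rw [hrel2 i hi0 hin]
      _ = (q ^ (2 * (m + 1 + 1))) • (x (-i) * x i ^ (m + 1 + 1))
            + (q ^ (m + 1 + 2) * (q ^ (m + 1 + 1) - (q⁻¹) ^ (m + 1 + 1))) • (Om q x n (i + 1) * x i ^ (m + 1)) := by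
          rw [add_mul, smul_mul_assoc, smul_mul_assoc, mul_assoc, ← pow_succ']
          simp only [smul_add, smul_smul, inv_pow]
          match_scalars <;> field_simp <;> ring

lemma xpow_full (q : k) (hq : q ≠ 0) (hl : q - q⁻¹ ≠ 0) (x : ℤ → X) (n : ℕ)
    (hrel1 : ∀ i j : ℤ, -(n : ℤ) ≤ i → j ≤ n → i ≠ 0 → j ≠ 0 → i < j → j ≠ -i →
      x j * x i = q • (x i * x j))
    (hrel2 : ∀ i : ℤ, 1 ≤ i → i ≤ n →
      x i * x (-i) = (q ^ 2) • (x (-i) * x i) + (q ^ 2 * (q - q⁻¹)) • Om q x n (i + 1))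
    {i : ℤ} (hi0 : 1 ≤ i) (hin : i ≤ n) (m : ℕ) :
    x i * x (-i) ^ m
      = (q ^ (2 * m)) • (x (-i) ^ m * x i)
        + (q ^ (m + 1) * (q - q⁻¹) * qnum q (m : ℤ)) • (Om q x n (i + 1) * x (-i) ^ (m - 1)) := by
  cases m with
  | zero => simp [qnum_zero]
  | succ m =>
    rw [xpow_rel q hq x n hrel1 hrel2 hi0 hin m, ← lambda_qnum q hl (m+1)]
    simp only [Nat.add_sub_cancel]
    match_scalars <;> field_simp <;> ring

lemma xpow_full' (q : k) (hq : q ≠ 0) (hl : q - q⁻¹ ≠ 0) (x : ℤ → X) (n : ℕ)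
    (hrel1 : ∀ i j : ℤ, -(n : ℤ) ≤ i → j ≤ n → i ≠ 0 → j ≠ 0 → i < j → j ≠ -i →
      x j * x i = q • (x i * x j))
    (hrel2 : ∀ i : ℤ, 1 ≤ i → i ≤ n →
      x i * x (-i) = (q ^ 2) • (x (-i) * x i) + (q ^ 2 * (q - q⁻¹)) • Om q x n (i + 1))
    {i : ℤ} (hi0 : 1 ≤ i) (hin : i ≤ n) (m : ℕ) :
    x i ^ m * x (-i)
      = (q ^ (2 * m)) • (x (-i) * x i ^ m)
        + (q ^ (m + 1) * (q - q⁻¹) * qnum q (m : ℤ)) • (Om q x n (i + 1) * x i ^ (m - 1)) := by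
  cases m with
  | zero => simp [qnum_zero]
  | succ m =>
    rw [xpow_rel' q hq x n hrel1 hrel2 hi0 hin m, ← lambda_qnum q hl (m+1)]
    simp only [Nat.add_sub_cancel]
    match_scalars <;> field_simp <;> ring

end QSAux


/-- Formulas (i)-(iv) for multiplying a normal monomial by a generator. -/
theorem stmt6 {k X : Type*} [Field k] [CharZero k] [Ring X] [Algebra k X]
    (n : ℕ) (hn : 2 ≤ n) (q : k) (hq : q ≠ 0) (hroot : ∀ r : ℕ, r ≠ 0 → q ^ r ≠ 1)
    (x : ℤ → X)
    (hrel1 : ∀ i j : ℤ, -(n : ℤ) ≤ i → j ≤ n → i ≠ 0 → j ≠ 0 → i < j → j ≠ -i →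
      x j * x i = q • (x i * x j))
    (hrel2 : ∀ i : ℤ, 1 ≤ i → i ≤ n →
      x i * x (-i) = (q ^ 2) • (x (-i) * x i) + (q ^ 2 * (q - q⁻¹)) • Om q x n (i + 1)) :
    ∀ i : ℤ, 1 ≤ i → i ≤ n → ∀ a : ℤ → ℕ, a 0 = 0 →
      x (-i) * mono x n a
        = (∏ j ∈ Finset.Icc (-(n : ℤ)) (-i - 1), q ^ a j) • mono x n (a + Pi.single (-i) 1) ∧
      mono x n a * x i
        = (∏ j ∈ Finset.Icc (i + 1) (n : ℤ), q ^ a j) • mono x n (a + Pi.single i 1) ∧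
      x i * mono x n a
        = ((∏ j ∈ Finset.Icc (-(n : ℤ)) (i - 1), q ^ a j) * q ^ a (-i)) •
            mono x n (a + Pi.single i 1)
          + ((∏ j ∈ Finset.Icc (-(n : ℤ)) (-i - 1), q ^ (-(a j : ℤ)))
              * q ^ ((a (-i) : ℤ) + 1) * (q - q⁻¹) * qnum q (a (-i))) •
            (Om q x n (i + 1) * mono x n (a - Pi.single (-i) 1)) ∧
      mono x n a * x (-i)
        = ((∏ j ∈ Finset.Icc (1 - i) (n : ℤ), q ^ a j) * q ^ a i) •
            mono x n (a + Pi.single (-i) 1)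
          + ((∏ j ∈ Finset.Icc i (n : ℤ), q ^ a j)
              * (∏ j ∈ Finset.Icc (-(n : ℤ)) (-i - 1), q ^ (-2 * (a j : ℤ)))
              * q * (q - q⁻¹) * qnum q (a i)) •
            (Om q x n (i + 1) * mono x n (a - Pi.single i 1)) := by
  intro i hi1 hi2 a ha0
  lift i to ℕ using (by linarith : (0:ℤ) ≤ i) with iN
  have hN1 : 1 ≤ iN := by exact_mod_cast hi1
  have hN2 : iN ≤ n := by exact_mod_cast hi2
  have hl : q - q⁻¹ ≠ 0 := by
    have h2 : q ^ 2 ≠ 1 := hroot 2 (by norm_num)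
    intro h
    rw [sub_eq_zero] at h
    apply h2
    rw [sq]
    nth_rewrite 2 [h]
    exact mul_inv_cancel₀ hq
  have hii : ((iN:ℤ)) ≠ 0 := by omega
  -- index lists
  have hAmem : ∀ j ∈ QSAux.seg (-(n:ℤ)) (n - iN), -(n:ℤ) ≤ j ∧ j ≤ -(iN:ℤ) - 1 := by
    intro j hj; rw [QSAux.mem_seg] at hj; omega
  have hB1mem : ∀ j ∈ QSAux.seg (1 - (iN:ℤ)) (iN - 1), 1 - (iN:ℤ) ≤ j ∧ j ≤ -1 := by
    intro j hj; rw [QSAux.mem_seg] at hj; omega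
  have hB2mem : ∀ j ∈ QSAux.seg (1:ℤ) (iN - 1), 1 ≤ j ∧ j ≤ (iN:ℤ) - 1 := by
    intro j hj; rw [QSAux.mem_seg] at hj; omega
  have hCmem : ∀ j ∈ QSAux.seg ((iN:ℤ) + 1) (n - iN), (iN:ℤ) + 1 ≤ j ∧ j ≤ (n:ℤ) := by
    intro j hj; rw [QSAux.mem_seg] at hj; omega
  have hsplit : ∀ b : ℤ → ℕ, mono x n b =
      ((QSAux.seg (-(n:ℤ)) (n - iN)).map fun j => x j ^ b j).prod *
        (x (-(iN:ℤ)) ^ b (-(iN:ℤ)) *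
          (((QSAux.seg (1 - (iN:ℤ)) (iN - 1)).map fun j => x j ^ b j).prod *
            (((QSAux.seg (1:ℤ) (iN - 1)).map fun j => x j ^ b j).prod *
              (x ((iN:ℤ)) ^ b ((iN:ℤ)) *
                ((QSAux.seg ((iN:ℤ) + 1) (n - iN)).map fun j => x j ^ b j).prod)))) := by
    intro b
    rw [mono, QSAux.idx_split n iN hN1 hN2]
    simp only [List.map_append, List.prod_append, List.map_cons, List.map_nil, List.prod_cons,
      List.prod_nil, mul_one]
  have hmapc : ∀ (l : List ℤ) (b b' : ℤ → ℕ), (∀ j ∈ l, b j = b' j) →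
      ((l.map fun j => x j ^ b j).prod = (l.map fun j => x j ^ b' j).prod) := by
    intro l b b' h
    congr 1
    exact List.map_congr_left (fun j hj => by rw [h j hj])
  -- Finset-product forms of the list coefficients
  have hIccA : ∀ c : k, ((QSAux.seg (-(n:ℤ)) (n - iN)).map fun j => c ^ a j).prod
      = ∏ j ∈ Finset.Icc (-(n:ℤ)) (-(iN:ℤ) - 1), c ^ a j := by
    intro c
    rw [QSAux.seg_map_prod]
    rw [show -(n:ℤ) + ((n - iN : ℕ):ℤ) - 1 = -(iN:ℤ) - 1 from by omega]
  have hIccB1 : ((QSAux.seg (1 - (iN:ℤ)) (iN - 1)).map fun j => q ^ a j).prod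
      = ∏ j ∈ Finset.Icc (1 - (iN:ℤ)) (-1 : ℤ), q ^ a j := by
    rw [QSAux.seg_map_prod]
    rw [show 1 - (iN:ℤ) + ((iN - 1 : ℕ):ℤ) - 1 = -1 from by omega]
  have hIccB2 : ((QSAux.seg (1:ℤ) (iN - 1)).map fun j => q ^ a j).prod
      = ∏ j ∈ Finset.Icc (1:ℤ) ((iN:ℤ) - 1), q ^ a j := by
    rw [QSAux.seg_map_prod]
    rw [show (1:ℤ) + ((iN - 1 : ℕ):ℤ) - 1 = (iN:ℤ) - 1 from by omega]
  have hIccC : ((QSAux.seg ((iN:ℤ) + 1) (n - iN)).map fun j => q ^ a j).prod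
      = ∏ j ∈ Finset.Icc ((iN:ℤ) + 1) (n:ℤ), q ^ a j := by
    rw [QSAux.seg_map_prod]
    rw [show (iN:ℤ) + 1 + ((n - iN : ℕ):ℤ) - 1 = (n:ℤ) from by omega]
  refine ⟨?_, ?_, ?_, ?_⟩
  · -- (i)  x(-i) * x^a
    rw [hsplit a, hsplit (a + Pi.single (-(iN:ℤ)) 1)]
    rw [hmapc _ (a + Pi.single (-(iN:ℤ)) 1) a
      (fun j hj => by
        have h := hAmem j hj
        simp [Pi.single_eq_of_ne (show j ≠ -(iN:ℤ) by omega)])]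
    rw [hmapc _ (a + Pi.single (-(iN:ℤ)) 1) a
      (fun j hj => by
        have h := hB1mem j hj
        simp [Pi.single_eq_of_ne (show j ≠ -(iN:ℤ) by omega)])]
    rw [hmapc _ (a + Pi.single (-(iN:ℤ)) 1) a
      (fun j hj => by
        have h := hB2mem j hj
        simp [Pi.single_eq_of_ne (show j ≠ -(iN:ℤ) by omega)])]
    rw [hmapc _ (a + Pi.single (-(iN:ℤ)) 1) a
      (fun j hj => by
        have h := hCmem j hj
        simp [Pi.single_eq_of_ne (show j ≠ -(iN:ℤ) by omega)])]
    rw [show ((a + Pi.single (-(iN:ℤ)) 1 : ℤ → ℕ)) (-(iN:ℤ)) = a (-(iN:ℤ)) + 1 from by simp]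
    rw [show ((a + Pi.single (-(iN:ℤ)) 1 : ℤ → ℕ)) ((iN:ℤ)) = a ((iN:ℤ)) from by
      simp [Pi.single_eq_of_ne (show (iN:ℤ) ≠ -(iN:ℤ) by omega)]]
    have e1 : x (-(iN:ℤ)) * ((QSAux.seg (-(n:ℤ)) (n - iN)).map fun j => x j ^ a j).prod
        = (((QSAux.seg (-(n:ℤ)) (n - iN)).map fun j => q ^ a j).prod) •
          ((((QSAux.seg (-(n:ℤ)) (n - iN)).map fun j => x j ^ a j).prod) * x (-(iN:ℤ))) := by
      refine QSAux.qc_list _ _ _ (fun j hj => ?_)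
      obtain ⟨h1, h2⟩ := hAmem j hj
      exact QSAux.qc_pow_left
        (hrel1 j (-(iN:ℤ)) h1 (by omega) (by omega) (by omega) (by omega) (by omega)) (a j)
    rw [← mul_assoc, e1, smul_mul_assoc, mul_assoc, ← mul_assoc (x (-(iN:ℤ))), ← pow_succ',
      hIccA]
  · -- (ii)  x^a * x i
    rw [hsplit a, hsplit (a + Pi.single ((iN:ℤ)) 1)]
    rw [hmapc _ (a + Pi.single ((iN:ℤ)) 1) a
      (fun j hj => by
        have h := hAmem j hj
        simp [Pi.single_eq_of_ne (show j ≠ (iN:ℤ) by omega)])]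
    rw [hmapc _ (a + Pi.single ((iN:ℤ)) 1) a
      (fun j hj => by
        have h := hB1mem j hj
        simp [Pi.single_eq_of_ne (show j ≠ (iN:ℤ) by omega)])]
    rw [hmapc _ (a + Pi.single ((iN:ℤ)) 1) a
      (fun j hj => by
        have h := hB2mem j hj
        simp [Pi.single_eq_of_ne (show j ≠ (iN:ℤ) by omega)])]
    rw [hmapc _ (a + Pi.single ((iN:ℤ)) 1) a
      (fun j hj => by
        have h := hCmem j hj
        simp [Pi.single_eq_of_ne (show j ≠ (iN:ℤ) by omega)])]
    rw [show ((a + Pi.single ((iN:ℤ)) 1 : ℤ → ℕ)) ((iN:ℤ)) = a ((iN:ℤ)) + 1 from by simp]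
    rw [show ((a + Pi.single ((iN:ℤ)) 1 : ℤ → ℕ)) (-(iN:ℤ)) = a (-(iN:ℤ)) from by
      simp [Pi.single_eq_of_ne (show -(iN:ℤ) ≠ (iN:ℤ) by omega)]]
    have e2 : ((QSAux.seg ((iN:ℤ) + 1) (n - iN)).map fun j => x j ^ a j).prod * x ((iN:ℤ))
        = (((QSAux.seg ((iN:ℤ) + 1) (n - iN)).map fun j => q ^ a j).prod) •
          (x ((iN:ℤ)) * ((QSAux.seg ((iN:ℤ) + 1) (n - iN)).map fun j => x j ^ a j).prod) := by
      refine QSAux.qc_list' _ _ _ (fun j hj => ?_)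
      obtain ⟨h1, h2⟩ := hCmem j hj
      exact QSAux.qc_pow_right
        (hrel1 ((iN:ℤ)) j (by omega) (by omega) (by omega) (by omega) (by omega) (by omega)) (a j)
    simp only [mul_assoc]
    rw [e2]
    simp only [mul_smul_comm]
    rw [← mul_assoc (x ((iN:ℤ)) ^ a ((iN:ℤ))), ← pow_succ, hIccC]

  · -- (iii) x i * x^a
    rw [hsplit a, hsplit (a + Pi.single ((iN:ℤ)) 1), hsplit (a - Pi.single (-(iN:ℤ)) 1)]
    rw [hmapc _ (a + Pi.single ((iN:ℤ)) 1) a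
      (fun j hj => by
        have h := hAmem j hj
        simp [Pi.single_eq_of_ne (show j ≠ (iN:ℤ) by omega)])]
    rw [hmapc _ (a + Pi.single ((iN:ℤ)) 1) a
      (fun j hj => by
        have h := hB1mem j hj
        simp [Pi.single_eq_of_ne (show j ≠ (iN:ℤ) by omega)])]
    rw [hmapc _ (a + Pi.single ((iN:ℤ)) 1) a
      (fun j hj => by
        have h := hB2mem j hj
        simp [Pi.single_eq_of_ne (show j ≠ (iN:ℤ) by omega)])]
    rw [hmapc _ (a + Pi.single ((iN:ℤ)) 1) a
      (fun j hj => by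
        have h := hCmem j hj
        simp [Pi.single_eq_of_ne (show j ≠ (iN:ℤ) by omega)])]
    rw [hmapc _ (a - Pi.single (-(iN:ℤ)) 1) a
      (fun j hj => by
        have h := hAmem j hj
        simp [Pi.single_eq_of_ne (show j ≠ -(iN:ℤ) by omega)])]
    rw [hmapc _ (a - Pi.single (-(iN:ℤ)) 1) a
      (fun j hj => by
        have h := hB1mem j hj
        simp [Pi.single_eq_of_ne (show j ≠ -(iN:ℤ) by omega)])]
    rw [hmapc _ (a - Pi.single (-(iN:ℤ)) 1) a
      (fun j hj => by
        have h := hB2mem j hj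
        simp [Pi.single_eq_of_ne (show j ≠ -(iN:ℤ) by omega)])]
    rw [hmapc _ (a - Pi.single (-(iN:ℤ)) 1) a
      (fun j hj => by
        have h := hCmem j hj
        simp [Pi.single_eq_of_ne (show j ≠ -(iN:ℤ) by omega)])]
    rw [show ((a + Pi.single ((iN:ℤ)) 1 : ℤ → ℕ)) ((iN:ℤ)) = a ((iN:ℤ)) + 1 from by simp]
    rw [show ((a + Pi.single ((iN:ℤ)) 1 : ℤ → ℕ)) (-(iN:ℤ)) = a (-(iN:ℤ)) from by
      simp [Pi.single_eq_of_ne (show -(iN:ℤ) ≠ (iN:ℤ) by omega)]]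
    rw [show ((a - Pi.single (-(iN:ℤ)) 1 : ℤ → ℕ)) (-(iN:ℤ)) = a (-(iN:ℤ)) - 1 from by simp]
    rw [show ((a - Pi.single (-(iN:ℤ)) 1 : ℤ → ℕ)) ((iN:ℤ)) = a ((iN:ℤ)) from by
      simp [Pi.single_eq_of_ne (show (iN:ℤ) ≠ -(iN:ℤ) by omega)]]
    set PA := ((QSAux.seg (-(n:ℤ)) (n - iN)).map fun j => x j ^ a j).prod with hPA
    set PB1 := ((QSAux.seg (1 - (iN:ℤ)) (iN - 1)).map fun j => x j ^ a j).prod with hPB1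
    set PB2 := ((QSAux.seg (1:ℤ) (iN - 1)).map fun j => x j ^ a j).prod with hPB2
    set PC := ((QSAux.seg ((iN:ℤ) + 1) (n - iN)).map fun j => x j ^ a j).prod with hPC
    have eA : x ((iN:ℤ)) * PA
        = (((QSAux.seg (-(n:ℤ)) (n - iN)).map fun j => q ^ a j).prod) • (PA * x ((iN:ℤ))) := by
      rw [hPA]
      refine QSAux.qc_list _ _ _ (fun j hj => ?_)
      obtain ⟨h1, h2⟩ := hAmem j hj
      exact QSAux.qc_pow_left
        (hrel1 j ((iN:ℤ)) h1 (by omega) (by omega) (by omega) (by omega) (by omega)) (a j)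
    have eB1 : x ((iN:ℤ)) * PB1
        = (((QSAux.seg (1 - (iN:ℤ)) (iN - 1)).map fun j => q ^ a j).prod) • (PB1 * x ((iN:ℤ))) := by
      rw [hPB1]
      refine QSAux.qc_list _ _ _ (fun j hj => ?_)
      obtain ⟨h1, h2⟩ := hB1mem j hj
      exact QSAux.qc_pow_left
        (hrel1 j ((iN:ℤ)) (by omega) (by omega) (by omega) (by omega) (by omega) (by omega)) (a j)
    have eB2 : x ((iN:ℤ)) * PB2
        = (((QSAux.seg (1:ℤ) (iN - 1)).map fun j => q ^ a j).prod) • (PB2 * x ((iN:ℤ))) := by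
      rw [hPB2]
      refine QSAux.qc_list _ _ _ (fun j hj => ?_)
      obtain ⟨h1, h2⟩ := hB2mem j hj
      exact QSAux.qc_pow_left
        (hrel1 j ((iN:ℤ)) (by omega) (by omega) (by omega) (by omega) (by omega) (by omega)) (a j)
    have eAOm : PA * Om q x n ((iN:ℤ) + 1)
        = (((QSAux.seg (-(n:ℤ)) (n - iN)).map fun j => ((q⁻¹) ^ 2) ^ a j).prod) •
          (Om q x n ((iN:ℤ) + 1) * PA) := by
      rw [hPA]
      refine QSAux.qc_list' _ _ _ (fun j hj => ?_)
      obtain ⟨h1, h2⟩ := hAmem j hj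
      have hb : Om q x n ((iN:ℤ) + 1) * x j = (q ^ 2) • (x j * Om q x n ((iN:ℤ) + 1)) := by
        have := QSAux.Om_comm_big q hq x n hrel1 hrel2
          (show 1 ≤ (iN:ℤ) + 1 by omega) (show (iN:ℤ) + 1 ≤ -j by omega) (show -j ≤ (n:ℤ) by omega)
        simpa using this
      have hb' : x j * Om q x n ((iN:ℤ) + 1) = ((q⁻¹) ^ 2) • (Om q x n ((iN:ℤ) + 1) * x j) := by
        rw [hb, smul_smul, ← mul_pow, inv_mul_cancel₀ hq, one_pow, one_smul]
      exact QSAux.qc_pow_right hb' (a j)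
    have eXm := QSAux.xpow_full q hq hl x n hrel1 hrel2 hi1 hi2 (a (-(iN:ℤ)))
    -- statement coefficient conversions
    have hs3 : (∏ j ∈ Finset.Icc (-(n:ℤ)) ((iN:ℤ) - 1), q ^ a j)
        = (∏ j ∈ Finset.Icc (-(n:ℤ)) (-(iN:ℤ) - 1), q ^ a j) * q ^ a (-(iN:ℤ))
          * (∏ j ∈ Finset.Icc (1 - (iN:ℤ)) (-1 : ℤ), q ^ a j)
          * (∏ j ∈ Finset.Icc (1:ℤ) ((iN:ℤ) - 1), q ^ a j) := by
      rw [QSAux.prod_Icc_split (fun j => q ^ a j)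
        (show -(n:ℤ) ≤ (-(iN:ℤ) - 1) + 1 by omega) (show -(iN:ℤ) - 1 ≤ (iN:ℤ) - 1 by omega)]
      rw [show -(iN:ℤ) - 1 + 1 = -(iN:ℤ) by ring]
      rw [QSAux.prod_Icc_split (fun j => q ^ a j)
        (show -(iN:ℤ) ≤ -(iN:ℤ) + 1 by omega) (show -(iN:ℤ) ≤ (iN:ℤ) - 1 by omega)]
      rw [Finset.Icc_self, Finset.prod_singleton]
      rw [show -(iN:ℤ) + 1 = 1 - (iN:ℤ) by ring]
      rw [QSAux.prod_Icc_split (fun j => q ^ a j)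
        (show 1 - (iN:ℤ) ≤ (0:ℤ) + 1 by omega) (show (0:ℤ) ≤ (iN:ℤ) - 1 by omega)]
      rw [QSAux.prod_Icc_split (fun j => q ^ a j)
        (show 1 - (iN:ℤ) ≤ (-1:ℤ) + 1 by omega) (show (-1:ℤ) ≤ (0:ℤ) by omega)]
      rw [show (-1:ℤ) + 1 = 0 by ring, Finset.Icc_self, Finset.prod_singleton, ha0, pow_zero,
        mul_one, show (0:ℤ) + 1 = 1 by ring]
      ring
    have h6 : (∏ j ∈ Finset.Icc (-(n:ℤ)) (-(iN:ℤ) - 1), q ^ (-(a j : ℤ)))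
        = (∏ j ∈ Finset.Icc (-(n:ℤ)) (-(iN:ℤ) - 1), q ^ a j)
          * (∏ j ∈ Finset.Icc (-(n:ℤ)) (-(iN:ℤ) - 1), ((q⁻¹) ^ 2) ^ a j) := by
      rw [← Finset.prod_mul_distrib]
      refine Finset.prod_congr rfl (fun j _ => ?_)
      rw [← mul_pow, show q * (q⁻¹) ^ 2 = q⁻¹ from by rw [sq, ← mul_assoc, mul_inv_cancel₀ hq, one_mul],
        zpow_neg, zpow_natCast, ← inv_pow]
    have h8 : (q : k) ^ ((a (-(iN:ℤ)) : ℤ) + 1) = q ^ (a (-(iN:ℤ)) + 1) := by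
      rw [show ((a (-(iN:ℤ)) : ℤ)) + 1 = ((a (-(iN:ℤ)) + 1 : ℕ) : ℤ) from by push_cast; ring,
        zpow_natCast]
    -- assemble
    rw [← mul_assoc (x ((iN:ℤ))) PA, eA, smul_mul_assoc, mul_assoc PA]
    rw [← mul_assoc (x ((iN:ℤ))) (x (-(iN:ℤ)) ^ a (-(iN:ℤ))), eXm]
    rw [add_mul, smul_mul_assoc, smul_mul_assoc, mul_assoc (x (-(iN:ℤ)) ^ a (-(iN:ℤ))),
      mul_assoc (Om q x n ((iN:ℤ) + 1))]
    rw [← mul_assoc (x ((iN:ℤ))) PB1, eB1, smul_mul_assoc, mul_assoc PB1]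
    rw [← mul_assoc (x ((iN:ℤ))) PB2, eB2, smul_mul_assoc, mul_assoc PB2]
    rw [← mul_assoc (x ((iN:ℤ))) (x ((iN:ℤ)) ^ a ((iN:ℤ))), ← pow_succ']
    rw [mul_add PA]
    simp only [mul_smul_comm]
    rw [← mul_assoc PA (Om q x n ((iN:ℤ) + 1)), eAOm, smul_mul_assoc,
      mul_assoc (Om q x n ((iN:ℤ) + 1))]
    simp only [smul_add, smul_smul]
    rw [hIccA q, hIccA ((q⁻¹) ^ 2), hIccB1, hIccB2, hs3, h6, h8]
    match_scalars <;> ring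

  · -- (iv)  x^a * x(-i)
    rw [hsplit a, hsplit (a + Pi.single (-(iN:ℤ)) 1), hsplit (a - Pi.single ((iN:ℤ)) 1)]
    rw [hmapc _ (a + Pi.single (-(iN:ℤ)) 1) a
      (fun j hj => by
        have h := hAmem j hj
        simp [Pi.single_eq_of_ne (show j ≠ -(iN:ℤ) by omega)])]
    rw [hmapc _ (a + Pi.single (-(iN:ℤ)) 1) a
      (fun j hj => by
        have h := hB1mem j hj
        simp [Pi.single_eq_of_ne (show j ≠ -(iN:ℤ) by omega)])]
    rw [hmapc _ (a + Pi.single (-(iN:ℤ)) 1) a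
      (fun j hj => by
        have h := hB2mem j hj
        simp [Pi.single_eq_of_ne (show j ≠ -(iN:ℤ) by omega)])]
    rw [hmapc _ (a + Pi.single (-(iN:ℤ)) 1) a
      (fun j hj => by
        have h := hCmem j hj
        simp [Pi.single_eq_of_ne (show j ≠ -(iN:ℤ) by omega)])]
    rw [hmapc _ (a - Pi.single ((iN:ℤ)) 1) a
      (fun j hj => by
        have h := hAmem j hj
        simp [Pi.single_eq_of_ne (show j ≠ (iN:ℤ) by omega)])]
    rw [hmapc _ (a - Pi.single ((iN:ℤ)) 1) a
      (fun j hj => by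
        have h := hB1mem j hj
        simp [Pi.single_eq_of_ne (show j ≠ (iN:ℤ) by omega)])]
    rw [hmapc _ (a - Pi.single ((iN:ℤ)) 1) a
      (fun j hj => by
        have h := hB2mem j hj
        simp [Pi.single_eq_of_ne (show j ≠ (iN:ℤ) by omega)])]
    rw [hmapc _ (a - Pi.single ((iN:ℤ)) 1) a
      (fun j hj => by
        have h := hCmem j hj
        simp [Pi.single_eq_of_ne (show j ≠ (iN:ℤ) by omega)])]
    rw [show ((a + Pi.single (-(iN:ℤ)) 1 : ℤ → ℕ)) (-(iN:ℤ)) = a (-(iN:ℤ)) + 1 from by simp]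
    rw [show ((a + Pi.single (-(iN:ℤ)) 1 : ℤ → ℕ)) ((iN:ℤ)) = a ((iN:ℤ)) from by
      simp [Pi.single_eq_of_ne (show (iN:ℤ) ≠ -(iN:ℤ) by omega)]]
    rw [show ((a - Pi.single ((iN:ℤ)) 1 : ℤ → ℕ)) ((iN:ℤ)) = a ((iN:ℤ)) - 1 from by simp]
    rw [show ((a - Pi.single ((iN:ℤ)) 1 : ℤ → ℕ)) (-(iN:ℤ)) = a (-(iN:ℤ)) from by
      simp [Pi.single_eq_of_ne (show -(iN:ℤ) ≠ (iN:ℤ) by omega)]]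
    set PA := ((QSAux.seg (-(n:ℤ)) (n - iN)).map fun j => x j ^ a j).prod with hPA
    set PB1 := ((QSAux.seg (1 - (iN:ℤ)) (iN - 1)).map fun j => x j ^ a j).prod with hPB1
    set PB2 := ((QSAux.seg (1:ℤ) (iN - 1)).map fun j => x j ^ a j).prod with hPB2
    set PC := ((QSAux.seg ((iN:ℤ) + 1) (n - iN)).map fun j => x j ^ a j).prod with hPC
    have eCm : PC * x (-(iN:ℤ))
        = (((QSAux.seg ((iN:ℤ) + 1) (n - iN)).map fun j => q ^ a j).prod) •
          (x (-(iN:ℤ)) * PC) := by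
      rw [hPC]
      refine QSAux.qc_list' _ _ _ (fun j hj => ?_)
      obtain ⟨h1, h2⟩ := hCmem j hj
      exact QSAux.qc_pow_right
        (hrel1 (-(iN:ℤ)) j (by omega) (by omega) (by omega) (by omega) (by omega) (by omega)) (a j)
    have eB2m : PB2 * x (-(iN:ℤ))
        = (((QSAux.seg (1:ℤ) (iN - 1)).map fun j => q ^ a j).prod) • (x (-(iN:ℤ)) * PB2) := by
      rw [hPB2]
      refine QSAux.qc_list' _ _ _ (fun j hj => ?_)
      obtain ⟨h1, h2⟩ := hB2mem j hj
      exact QSAux.qc_pow_right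
        (hrel1 (-(iN:ℤ)) j (by omega) (by omega) (by omega) (by omega) (by omega) (by omega)) (a j)
    have eB1m : PB1 * x (-(iN:ℤ))
        = (((QSAux.seg (1 - (iN:ℤ)) (iN - 1)).map fun j => q ^ a j).prod) •
          (x (-(iN:ℤ)) * PB1) := by
      rw [hPB1]
      refine QSAux.qc_list' _ _ _ (fun j hj => ?_)
      obtain ⟨h1, h2⟩ := hB1mem j hj
      exact QSAux.qc_pow_right
        (hrel1 (-(iN:ℤ)) j (by omega) (by omega) (by omega) (by omega) (by omega) (by omega)) (a j)
    have eB2Om : PB2 * Om q x n ((iN:ℤ) + 1) = Om q x n ((iN:ℤ) + 1) * PB2 := by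
      rw [hPB2]
      refine ((Commute.list_prod_right _ _ (fun u hu => ?_)).eq).symm
      obtain ⟨j, hj, rfl⟩ := List.mem_map.1 hu
      obtain ⟨h1, h2⟩ := hB2mem j hj
      exact ((show Commute (Om q x n ((iN:ℤ) + 1)) (x j) from
        QSAux.Om_comm_small q hq x n hrel1 (show 1 ≤ (iN:ℤ) by omega) hi2
          (by omega) (by omega) (by omega)).pow_right (a j))
    have eB1Om : PB1 * Om q x n ((iN:ℤ) + 1) = Om q x n ((iN:ℤ) + 1) * PB1 := by
      rw [hPB1]
      refine ((Commute.list_prod_right _ _ (fun u hu => ?_)).eq).symm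
      obtain ⟨j, hj, rfl⟩ := List.mem_map.1 hu
      obtain ⟨h1, h2⟩ := hB1mem j hj
      exact ((show Commute (Om q x n ((iN:ℤ) + 1)) (x j) from
        QSAux.Om_comm_small q hq x n hrel1 (show 1 ≤ (iN:ℤ) by omega) hi2
          (by omega) (by omega) (by omega)).pow_right (a j))
    have eXmOm : x (-(iN:ℤ)) ^ a (-(iN:ℤ)) * Om q x n ((iN:ℤ) + 1)
        = Om q x n ((iN:ℤ) + 1) * x (-(iN:ℤ)) ^ a (-(iN:ℤ)) :=
      (((show Commute (Om q x n ((iN:ℤ) + 1)) (x (-(iN:ℤ))) from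
        QSAux.Om_comm_small q hq x n hrel1 (show 1 ≤ (iN:ℤ) by omega) hi2
          (by omega) (by omega) (by omega)).pow_right (a (-(iN:ℤ)))).eq).symm
    have eAOm : PA * Om q x n ((iN:ℤ) + 1)
        = (((QSAux.seg (-(n:ℤ)) (n - iN)).map fun j => ((q⁻¹) ^ 2) ^ a j).prod) •
          (Om q x n ((iN:ℤ) + 1) * PA) := by
      rw [hPA]
      refine QSAux.qc_list' _ _ _ (fun j hj => ?_)
      obtain ⟨h1, h2⟩ := hAmem j hj
      have hb : Om q x n ((iN:ℤ) + 1) * x j = (q ^ 2) • (x j * Om q x n ((iN:ℤ) + 1)) := by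
        have := QSAux.Om_comm_big q hq x n hrel1 hrel2
          (show 1 ≤ (iN:ℤ) + 1 by omega) (show (iN:ℤ) + 1 ≤ -j by omega) (show -j ≤ (n:ℤ) by omega)
        simpa using this
      have hb' : x j * Om q x n ((iN:ℤ) + 1) = ((q⁻¹) ^ 2) • (Om q x n ((iN:ℤ) + 1) * x j) := by
        rw [hb, smul_smul, ← mul_pow, inv_mul_cancel₀ hq, one_pow, one_smul]
      exact QSAux.qc_pow_right hb' (a j)
    have eXI := QSAux.xpow_full' q hq hl x n hrel1 hrel2 hi1 hi2 (a ((iN:ℤ)))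
    have hs5 : (∏ j ∈ Finset.Icc ((iN:ℤ)) (n:ℤ), q ^ a j)
        = q ^ a ((iN:ℤ)) * ∏ j ∈ Finset.Icc ((iN:ℤ) + 1) (n:ℤ), q ^ a j := by
      rw [QSAux.prod_Icc_split (fun j => q ^ a j)
        (show (iN:ℤ) ≤ (iN:ℤ) + 1 by omega) (show (iN:ℤ) ≤ (n:ℤ) by omega)]
      rw [Finset.Icc_self, Finset.prod_singleton]
    have hs4 : (∏ j ∈ Finset.Icc (1 - (iN:ℤ)) (n:ℤ), q ^ a j)
        = (∏ j ∈ Finset.Icc (1 - (iN:ℤ)) (-1 : ℤ), q ^ a j)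
          * (∏ j ∈ Finset.Icc (1:ℤ) ((iN:ℤ) - 1), q ^ a j)
          * q ^ a ((iN:ℤ)) * ∏ j ∈ Finset.Icc ((iN:ℤ) + 1) (n:ℤ), q ^ a j := by
      rw [QSAux.prod_Icc_split (fun j => q ^ a j)
        (show 1 - (iN:ℤ) ≤ (-1:ℤ) + 1 by omega) (show (-1:ℤ) ≤ (n:ℤ) by omega)]
      rw [show (-1:ℤ) + 1 = 0 by ring]
      rw [QSAux.prod_Icc_split (fun j => q ^ a j)
        (show (0:ℤ) ≤ (0:ℤ) + 1 by omega) (show (0:ℤ) ≤ (n:ℤ) by omega)]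
      rw [Finset.Icc_self, Finset.prod_singleton, ha0, pow_zero, one_mul,
        show (0:ℤ) + 1 = 1 by ring]
      rw [QSAux.prod_Icc_split (fun j => q ^ a j)
        (show (1:ℤ) ≤ ((iN:ℤ) - 1) + 1 by omega) (show (iN:ℤ) - 1 ≤ (n:ℤ) by omega)]
      rw [show (iN:ℤ) - 1 + 1 = (iN:ℤ) by ring, hs5]
      ring
    have h7 : (∏ j ∈ Finset.Icc (-(n:ℤ)) (-(iN:ℤ) - 1), q ^ (-2 * (a j : ℤ)))
        = ∏ j ∈ Finset.Icc (-(n:ℤ)) (-(iN:ℤ) - 1), ((q⁻¹) ^ 2) ^ a j := by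
      refine Finset.prod_congr rfl (fun j _ => ?_)
      rw [show (-2 : ℤ) * (a j : ℤ) = -((2 * a j : ℕ) : ℤ) from by push_cast; ring,
        zpow_neg, zpow_natCast, ← inv_pow, pow_mul]
    -- assemble
    simp only [mul_assoc]
    rw [eCm]
    simp only [mul_smul_comm]
    rw [← mul_assoc (x ((iN:ℤ)) ^ a ((iN:ℤ))), eXI]
    rw [add_mul, smul_mul_assoc, smul_mul_assoc, mul_assoc (x (-(iN:ℤ))),
      mul_assoc (Om q x n ((iN:ℤ) + 1))]
    simp only [mul_add, mul_smul_comm]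
    rw [← mul_assoc PB2 (x (-(iN:ℤ))), eB2m, smul_mul_assoc, mul_assoc (x (-(iN:ℤ))) PB2]
    simp only [mul_smul_comm]
    rw [← mul_assoc PB1 (x (-(iN:ℤ))), eB1m, smul_mul_assoc, mul_assoc (x (-(iN:ℤ))) PB1]
    simp only [mul_smul_comm]
    rw [← mul_assoc (x (-(iN:ℤ)) ^ a (-(iN:ℤ))) (x (-(iN:ℤ))), ← pow_succ]
    rw [← mul_assoc PB2 (Om q x n ((iN:ℤ) + 1)), eB2Om, mul_assoc (Om q x n ((iN:ℤ) + 1)) PB2]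
    rw [← mul_assoc PB1 (Om q x n ((iN:ℤ) + 1)), eB1Om, mul_assoc (Om q x n ((iN:ℤ) + 1)) PB1]
    rw [← mul_assoc (x (-(iN:ℤ)) ^ a (-(iN:ℤ))) (Om q x n ((iN:ℤ) + 1)), eXmOm,
      mul_assoc (Om q x n ((iN:ℤ) + 1)) (x (-(iN:ℤ)) ^ a (-(iN:ℤ)))]
    rw [← mul_assoc PA (Om q x n ((iN:ℤ) + 1)), eAOm, smul_mul_assoc,
      mul_assoc (Om q x n ((iN:ℤ) + 1))]
    simp only [smul_smul, mul_smul_comm]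
    rw [hIccA ((q⁻¹) ^ 2), hIccB1, hIccB2, hIccC, hs4, hs5, h7]
    match_scalars <;> ring
end
end

section
/- In the quantum symplectic space 𝒳, for every i ∈ I⁺ and every a ∈ ℕ^{2n}: Ω_i x^a = (∏_{l=−n}^{−i} q^{2a_l}) Σ_{j=i}^{n} q^{j−i+s_j(a)} x^{a+ε_{−j}+ε_j}, where s_j(a) := Σ_{l ∈ I, −j < l < j} a_l. -/
noncomputable section

/-- `s_j(a) = Σ_{l ∈ I, -j < l < j} a_l`. -/
def sE (j : ℤ) (a : ℤ → ℕ) : ℕ :=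
  ∑ l ∈ (Finset.Ioo (-j) j).erase 0, a l

lemma idxList_eq (n : ℕ) :
    idxList n = ((List.range (2*n+1)).map (fun a : ℕ => ((a:ℤ) - n))).filter (fun i => i != 0) := by
  simp only [idxList, bind_pure_comp, Functor.map, List.map_map]
  rfl

/-- Finset version of the index set. -/
def idxF (n : ℕ) : Finset ℤ := (Finset.Icc (-(n:ℤ)) (n:ℤ)).erase 0

lemma mem_idxF {n : ℕ} {m : ℤ} : m ∈ idxF n ↔ m ≠ 0 ∧ -(n:ℤ) ≤ m ∧ m ≤ n := by
  simp [idxF, Finset.mem_erase, Finset.mem_Icc, and_assoc]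

lemma mem_idxList {n : ℕ} {m : ℤ} : m ∈ idxList n ↔ m ≠ 0 ∧ -(n:ℤ) ≤ m ∧ m ≤ n := by
  rw [idxList_eq, List.mem_filter]
  constructor
  · rintro ⟨h1, h2⟩
    obtain ⟨t, ht, rfl⟩ := List.mem_map.mp h1
    rw [List.mem_range] at ht
    have h0 : (t:ℤ) - n ≠ 0 := by simpa using h2
    refine ⟨h0, by omega, by omega⟩
  · rintro ⟨h0, h1, h2⟩
    refine ⟨List.mem_map.mpr ⟨(m + n).toNat, ?_, by omega⟩, by simpa using h0⟩
    rw [List.mem_range]; omega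

lemma mem_idxList_iff_idxF {n : ℕ} {m : ℤ} : m ∈ idxList n ↔ m ∈ idxF n := by
  rw [mem_idxList, mem_idxF]

lemma idxList_pairwise (n : ℕ) : (idxList n).Pairwise (· < ·) := by
  rw [idxList_eq]
  refine List.Pairwise.sublist List.filter_sublist ?_
  rw [List.pairwise_map]
  exact (List.pairwise_lt_range (n := 2*n+1)).imp (by intro a b h; omega)

lemma sorted_split : ∀ (l : List ℤ), l.Pairwise (· < ·) → ∀ m ∈ l,
    l = l.filter (fun y => decide (y < m)) ++ m :: l.filter (fun y => decide (m < y)) := by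
  intro l
  induction l with
  | nil => intro _ m hm; simp at hm
  | cons a t ih =>
    intro hp m hm
    have ha : ∀ y ∈ t, a < y := fun y hy => (List.pairwise_cons.mp hp).1 y hy
    rcases List.mem_cons.mp hm with rfl | hm
    · have h1 : t.filter (fun y => decide (y < m)) = [] := by
        apply List.filter_eq_nil_iff.mpr
        intro y hy; simpa using not_lt.mpr (le_of_lt (ha y hy))
      have h2 : t.filter (fun y => decide (m < y)) = t := by
        apply List.filter_eq_self.mpr
        intro y hy; simpa using ha y hy
      simp [h1, h2]
    · have ham : a < m := ha m hm
      have := ih (List.pairwise_cons.mp hp).2 m hm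
      simp only [List.filter_cons]
      rw [if_pos (by simpa using ham), if_neg (by simpa using not_lt.mpr ham.le)]
      simpa using this

lemma mono_split {X : Type*} [Monoid X] (x : ℤ → X) (n : ℕ) (a : ℤ → ℕ) {m : ℤ}
    (hm : m ∈ idxList n) :
    mono x n a = (((idxList n).filter (fun y => decide (y < m))).map (fun i => x i ^ a i)).prod
      * x m ^ a m *
      (((idxList n).filter (fun y => decide (m < y))).map (fun i => x i ^ a i)).prod := by
  conv_lhs => rw [mono, sorted_split (idxList n) (idxList_pairwise n) m hm]
  rw [List.map_append, List.prod_append, List.map_cons, List.prod_cons, mul_assoc]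

section MonoLemmas
variable {X : Type*} [Monoid X] (x : ℤ → X) (n : ℕ)

lemma mono_one {a : ℤ → ℕ} (h : ∀ l ∈ idxList n, a l = 0) : mono x n a = 1 := by
  apply List.prod_eq_one
  intro z hz
  obtain ⟨l, hl, rfl⟩ := List.mem_map.mp hz
  rw [h l hl, pow_zero]

lemma mono_congr {a b : ℤ → ℕ} (h : ∀ l ∈ idxList n, a l = b l) : mono x n a = mono x n b := by
  unfold mono
  exact congrArg _ (List.map_congr_left fun l hl => by rw [h l hl])

lemma mono_prepend {b : ℤ → ℕ} {m : ℤ} (hm : m ∈ idxList n)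
    (hb : ∀ l ∈ idxList n, l < m → b l = 0) :
    x m * mono x n b = mono x n (b + Pi.single m 1) := by
  rw [mono_split x n b hm, mono_split x n (b + Pi.single m 1) hm]
  have hL : ∀ (c : ℤ → ℕ), (∀ l ∈ idxList n, l < m → c l = 0) →
      (((idxList n).filter (fun y => decide (y < m))).map (fun i => x i ^ c i)).prod = 1 := by
    intro c hc
    apply List.prod_eq_one
    intro z hz
    obtain ⟨l, hl, rfl⟩ := List.mem_map.mp hz
    obtain ⟨hl1, hl2⟩ := List.mem_filter.mp hl
    rw [hc l hl1 (by simpa using hl2), pow_zero]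
  rw [hL b hb, hL _ ?side]
  case side =>
    intro l hl hlm
    have h1 : (Pi.single m 1 : ℤ → ℕ) l = 0 := by
      rw [Pi.single_apply, if_neg (by omega)]
    simp [hb l hl hlm, h1]
  have hR : List.map (fun i => x i ^ (b + Pi.single m 1 : ℤ → ℕ) i)
        ((idxList n).filter (fun y => decide (m < y)))
      = List.map (fun i => x i ^ b i) ((idxList n).filter (fun y => decide (m < y))) := by
    apply List.map_congr_left
    intro l hl
    obtain ⟨hl1, hl2⟩ := List.mem_filter.mp hl
    have hlm : m < l := by simpa using hl2
    have h1 : (Pi.single m 1 : ℤ → ℕ) l = 0 := by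
      rw [Pi.single_apply, if_neg (by omega)]
    simp [h1]
  have hmid : (b + Pi.single m 1 : ℤ → ℕ) m = b m + 1 := by simp
  rw [hR, hmid, pow_succ']
  simp [mul_assoc]

end MonoLemmas

section AlgLemmas
variable {k X : Type*} [Field k] [Ring X] [Algebra k X] (n : ℕ) (q : k) (x : ℤ → X)

lemma mul_mono_swap (hq : q ≠ 0)
    (hrel1 : ∀ i j : ℤ, -(n : ℤ) ≤ i → j ≤ n → i ≠ 0 → j ≠ 0 → i < j → j ≠ -i →
      x j * x i = q • (x i * x j))
    {m : ℤ} (hm : m ∈ idxList n) (b : ℤ → ℕ) (hbm : m < 0 ∨ b (-m) = 0) :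
    x m * mono x n b
      = (q ^ (∑ l ∈ (idxF n).filter (· < m), b l)) • mono x n (b + Pi.single m 1) := by
  suffices H : ∀ w (b : ℤ → ℕ), (∑ l ∈ (idxF n).filter (· < m), b l) = w →
      (m < 0 ∨ b (-m) = 0) →
      x m * mono x n b = q ^ w • mono x n (b + Pi.single m 1) from H _ b rfl hbm
  intro w
  induction w with
  | zero =>
    intro b hw hbm'
    have hb0 : ∀ l ∈ idxList n, l < m → b l = 0 := by
      intro l hl hlm
      exact Finset.sum_eq_zero_iff.mp hw l
        (Finset.mem_filter.mpr ⟨mem_idxList_iff_idxF.mp hl, hlm⟩)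
    rw [pow_zero, one_smul]
    exact mono_prepend x n hm hb0
  | succ w ih =>
    intro b hw hbm'
    classical
    set S := (idxF n).filter (fun l => l < m ∧ b l ≠ 0) with hSdef
    have hS : S.Nonempty := by
      by_contra hS
      rw [Finset.not_nonempty_iff_eq_empty] at hS
      have : (∑ l ∈ (idxF n).filter (· < m), b l) = 0 := by
        apply Finset.sum_eq_zero
        intro l hl
        obtain ⟨hl1, hl2⟩ := Finset.mem_filter.mp hl
        by_contra hbl
        have : l ∈ S := Finset.mem_filter.mpr ⟨hl1, hl2, hbl⟩
        simp [hS] at this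
      omega
    set r := S.min' hS with hrdef
    have hrS : r ∈ S := Finset.min'_mem _ _
    obtain ⟨hrF, hrm, hbr⟩ : r ∈ idxF n ∧ r < m ∧ b r ≠ 0 := by
      have := Finset.mem_filter.mp hrS
      exact ⟨this.1, this.2.1, this.2.2⟩
    have hrL : r ∈ idxList n := mem_idxList_iff_idxF.mpr hrF
    have hmin : ∀ l ∈ idxList n, l < r → b l = 0 := by
      intro l hl hlr
      by_contra hbl
      have hlS : l ∈ S := Finset.mem_filter.mpr
        ⟨mem_idxList_iff_idxF.mp hl, by omega, hbl⟩
      have := Finset.min'_le S l hlS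
      omega
    set b' := Function.update b r (b r - 1) with hb'def
    have hb' : b = b' + Pi.single r 1 := by
      funext l
      by_cases hl : l = r
      · subst hl; simp [hb'def, Function.update_self]; omega
      · simp [hb'def, Function.update_of_ne hl, Pi.single_eq_of_ne hl]
    have hb'0 : ∀ l ∈ idxList n, l < r → b' l = 0 := by
      intro l hl hlr
      rw [hb'def, Function.update_of_ne (by omega)]
      exact hmin l hl hlr
    have hpeel : mono x n b = x r * mono x n b' := by
      rw [mono_prepend x n hrL hb'0, ← hb']
    have hmner : m ≠ -r := by
      rcases hbm' with h | h
      · have := mem_idxF.mp hrF; omega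
      · intro hc
        apply hbr
        rw [show r = -m by omega]
        exact h
    have hswap : x m * x r = q • (x r * x m) := by
      apply hrel1 r m (mem_idxF.mp hrF).2.1 (mem_idxList.mp hm).2.2
        (mem_idxF.mp hrF).1 (mem_idxList.mp hm).1 hrm hmner
    have hw' : (∑ l ∈ (idxF n).filter (· < m), b' l) = w := by
      have : (∑ l ∈ (idxF n).filter (· < m), b l)
          = (∑ l ∈ (idxF n).filter (· < m), b' l) + 1 := by
        conv_lhs => rw [hb']
        simp only [Pi.add_apply]
        rw [Finset.sum_add_distrib, Finset.sum_pi_single',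
          if_pos (by simp only [Finset.mem_filter]; exact ⟨hrF, hrm⟩)]
      omega
    have hbm'' : m < 0 ∨ b' (-m) = 0 := by
      rcases hbm' with h | h
      · exact Or.inl h
      · right
        rw [hb'def, Function.update_of_ne, h]
        intro hc
        exact hbr (by rw [← hc]; exact h)
    have hstep := ih b' hw' hbm''
    have hfinal : x r * mono x n (b' + Pi.single m 1) = mono x n (b + Pi.single m 1) := by
      rw [mono_prepend x n hrL (by
        intro l hl hlr
        have h1 : (Pi.single m 1 : ℤ → ℕ) l = 0 := by
          rw [Pi.single_apply, if_neg (by omega)]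
        simp [hb'0 l hl hlr, h1])]
      apply mono_congr
      intro l _
      rw [hb']
      simp [Pi.add_apply]
      ring
    calc x m * mono x n b = (x m * x r) * mono x n b' := by rw [hpeel, mul_assoc]
      _ = q • (x r * (x m * mono x n b')) := by rw [hswap, smul_mul_assoc, mul_assoc]
      _ = q • (x r * (q ^ w • mono x n (b' + Pi.single m 1))) := by rw [hstep]
      _ = (q ^ (w+1)) • (x r * mono x n (b' + Pi.single m 1)) := by
          rw [mul_smul_comm, smul_smul, pow_succ]
          ring_nf
      _ = (q ^ (w+1)) • mono x n (b + Pi.single m 1) := by rw [hfinal]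

lemma Om_empty {i : ℤ} (hi : (n:ℤ) < i) : Om q x n i = 0 := by
  rw [Om, Finset.Icc_eq_empty (by omega), Finset.sum_empty]

lemma Om_rec (hq : q ≠ 0) {i : ℤ} (h1 : i ≤ n) :
    Om q x n i = x (-i) * x i + q • Om q x n (i+1) := by
  rw [Om, Om, show Finset.Icc i (n:ℤ) = insert i (Finset.Icc (i+1) (n:ℤ)) from by
    ext t; simp only [Finset.mem_Icc, Finset.mem_insert]; omega,
    Finset.sum_insert (by simp only [Finset.mem_Icc]; omega)]
  rw [sub_self, zpow_zero, one_smul, Finset.smul_sum]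
  congr 1
  apply Finset.sum_congr rfl
  intro j hj
  rw [smul_smul]
  congr 1
  rw [← zpow_one_add₀ hq]
  congr 1
  ring

variable (hq : q ≠ 0)
  (hrel1 : ∀ i j : ℤ, -(n : ℤ) ≤ i → j ≤ n → i ≠ 0 → j ≠ 0 → i < j → j ≠ -i →
      x j * x i = q • (x i * x j))
  (hrel2 : ∀ i : ℤ, 1 ≤ i → i ≤ n →
      x i * x (-i) = (q ^ 2) • (x (-i) * x i) + (q ^ 2 * (q - q⁻¹)) • Om q x n (i + 1))

include hrel1 in
lemma Om_comm_small {i l : ℤ} (hl0 : l ≠ 0) (hl1 : -(n:ℤ) ≤ l) (hl2 : l ≤ n)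
    (h3 : -i < l) (h4 : l < i) : Om q x n i * x l = x l * Om q x n i := by
  rw [Om, Finset.sum_mul, Finset.mul_sum]
  apply Finset.sum_congr rfl
  intro j hj
  obtain ⟨hj1, hj2⟩ := Finset.mem_Icc.mp hj
  rw [smul_mul_assoc, mul_smul_comm]
  congr 1
  have e1 : x j * x l = q • (x l * x j) :=
    hrel1 l j hl1 hj2 hl0 (by omega) (by omega) (by omega)
  have e2 : x l * x (-j) = q • (x (-j) * x l) :=
    hrel1 (-j) l (by omega) hl2 (by omega) hl0 (by omega) (by omega)
  have hrhs : x l * (x (-j) * x j) = q • (x (-j) * x l * x j) := by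
    rw [← mul_assoc, e2, smul_mul_assoc]
  rw [mul_assoc, e1, mul_smul_comm, ← mul_assoc, hrhs]

include hq hrel1 hrel2 in
lemma Om_comm_neg {p : ℤ} (hp1 : 1 ≤ p) (hp2 : p ≤ n) :
    ∀ (t : ℕ) (i : ℤ), i = p - t → 1 ≤ i →
      Om q x n i * x (-p) = (q^2) • (x (-p) * Om q x n i) := by
  intro t
  induction t with
  | zero =>
    intro i hi _
    have hip : i = p := by omega
    subst hip
    rw [Om_rec n q x hq (by omega)]
    have hsm : Om q x n (i+1) * x (-i) = x (-i) * Om q x n (i+1) :=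
      Om_comm_small n q x hrel1 (by omega) (by omega) (by omega) (by omega) (by omega)
    have h2 := hrel2 i (by omega) (by omega)
    rw [add_mul, smul_mul_assoc, hsm, mul_assoc, h2]
    simp only [mul_add, add_mul, smul_add, mul_smul_comm, smul_mul_assoc, smul_smul, mul_assoc]
    match_scalars <;> field_simp <;> ring
  | succ t ih =>
    intro i hi hi1
    have hip : i < p := by omega
    rw [Om_rec n q x hq (by omega)]
    have hstep : Om q x n (i+1) * x (-p) = (q^2) • (x (-p) * Om q x n (i+1)) :=
      ih (i+1) (by omega) (by omega)
    have e1 : x i * x (-p) = q • (x (-p) * x i) :=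
      hrel1 (-p) i (by omega) (by omega) (by omega) (by omega) (by omega) (by omega)
    have e2 : x (-i) * x (-p) = q • (x (-p) * x (-i)) :=
      hrel1 (-p) (-i) (by omega) (by omega) (by omega) (by omega) (by omega) (by omega)
    have hpair : (x (-i) * x i) * x (-p) = (q^2) • (x (-p) * (x (-i) * x i)) := by
      rw [mul_assoc, e1, mul_smul_comm, ← mul_assoc, e2, smul_mul_assoc, smul_smul, ← mul_assoc]
      norm_num [pow_two]
    rw [add_mul, hpair, smul_mul_assoc, hstep]
    simp only [mul_add, add_mul, smul_add, mul_smul_comm, smul_mul_assoc, smul_smul, mul_assoc]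
    congr 2
    ring

include hq hrel1 hrel2 in
lemma Om_comm_pos {p : ℤ} (hp1 : 1 ≤ p) (hp2 : p ≤ n) :
    ∀ (t : ℕ) (i : ℤ), i = p - t → 1 ≤ i →
      x p * Om q x n i = (q^2) • (Om q x n i * x p) := by
  intro t
  induction t with
  | zero =>
    intro i hi _
    have hip : i = p := by omega
    subst hip
    rw [Om_rec n q x hq (by omega)]
    have hsm : Om q x n (i+1) * x i = x i * Om q x n (i+1) :=
      Om_comm_small n q x hrel1 (by omega) (by omega) (by omega) (by omega) (by omega)
    have h2 := hrel2 i (by omega) (by omega)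
    rw [mul_add, ← mul_assoc, h2]
    rw [add_mul]
    simp only [mul_add, add_mul, smul_add, mul_smul_comm, smul_mul_assoc, smul_smul, mul_assoc]
    simp only [hsm, mul_smul_comm, smul_smul]
    match_scalars <;> field_simp <;> ring
  | succ t ih =>
    intro i hi hi1
    have hip : i < p := by omega
    rw [Om_rec n q x hq (by omega)]
    have hstep : x p * Om q x n (i+1) = (q^2) • (Om q x n (i+1) * x p) :=
      ih (i+1) (by omega) (by omega)
    have e1 : x p * x i = q • (x i * x p) :=
      hrel1 i p (by omega) (by omega) (by omega) (by omega) (by omega) (by omega)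
    have e2 : x p * x (-i) = q • (x (-i) * x p) :=
      hrel1 (-i) p (by omega) (by omega) (by omega) (by omega) (by omega) (by omega)
    have hpair : x p * (x (-i) * x i) = (q^2) • ((x (-i) * x i) * x p) := by
      rw [← mul_assoc, e2, smul_mul_assoc, mul_assoc, e1, mul_smul_comm, smul_smul, ← mul_assoc]
      norm_num [pow_two]
    rw [mul_add, hpair, mul_smul_comm, hstep]
    simp only [mul_add, add_mul, smul_add, mul_smul_comm, smul_mul_assoc, smul_smul, mul_assoc]
    congr 2
    ring

end AlgLemmas

lemma sE_add_single (j m : ℤ) (a : ℤ → ℕ) :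
    sE j ((a + Pi.single m 1 : ℤ → ℕ)) = sE j a + (if m ≠ 0 ∧ -j < m ∧ m < j then 1 else 0) := by
  unfold sE
  simp only [Pi.add_apply]
  rw [Finset.sum_add_distrib, Finset.sum_pi_single']
  congr 1
  by_cases h : m ≠ 0 ∧ -j < m ∧ m < j
  · rw [if_pos h, if_pos]
    rw [Finset.mem_erase, Finset.mem_Ioo]
    exact ⟨h.1, h.2.1, h.2.2⟩
  · rw [if_neg h, if_neg]
    rw [Finset.mem_erase, Finset.mem_Ioo]
    tauto

lemma prod_pow_add_single {k : Type*} [Field k] (q : k) (n : ℕ) (i m : ℤ) (a : ℤ → ℕ) :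
    (∏ l ∈ Finset.Icc (-(n:ℤ)) (-i), q ^ (2 * (a + Pi.single m 1 : ℤ → ℕ) l))
      = (if m ∈ Finset.Icc (-(n:ℤ)) (-i) then q^2 else 1)
        * ∏ l ∈ Finset.Icc (-(n:ℤ)) (-i), q ^ (2 * a l) := by
  simp only [Pi.add_apply, Nat.mul_add, pow_add]
  rw [Finset.prod_mul_distrib, mul_comm]
  congr 1
  rw [show (∏ l ∈ Finset.Icc (-(n:ℤ)) (-i), q ^ (2 * (Pi.single m 1 : ℤ → ℕ) l))
      = ∏ l ∈ Finset.Icc (-(n:ℤ)) (-i), (if l = m then q^2 else 1) from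
    Finset.prod_congr rfl (fun l _ => by
      by_cases hl : l = m
      · subst hl; simp
      · rw [Pi.single_apply, if_neg hl, if_neg hl]; norm_num)]
  rw [Finset.prod_ite_eq' (Finset.Icc (-(n:ℤ)) (-i)) m (fun _ => q^2)]

section Main
variable {k X : Type*} [Field k] [Ring X] [Algebra k X]
variable (n : ℕ) (q : k) (x : ℤ → X)
variable (hq : q ≠ 0)
  (hrel1 : ∀ i j : ℤ, -(n : ℤ) ≤ i → j ≤ n → i ≠ 0 → j ≠ 0 → i < j → j ≠ -i →
      x j * x i = q • (x i * x j))
  (hrel2 : ∀ i : ℤ, 1 ≤ i → i ≤ n →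
      x i * x (-i) = (q ^ 2) • (x (-i) * x i) + (q ^ 2 * (q - q⁻¹)) • Om q x n (i + 1))

set_option maxHeartbeats 1000000 in
include hq hrel1 hrel2 in
lemma main_lemma : ∀ N : ℕ, ∀ i : ℤ, 1 ≤ i → ∀ a : ℤ → ℕ,
    (∑ l ∈ idxF n, a l) * (n+1) + ((n:ℤ) + 1 - i).toNat ≤ N →
    Om q x n i * mono x n a
      = (∏ l ∈ Finset.Icc (-(n:ℤ)) (-i), q ^ (2 * a l)) •
          ∑ j ∈ Finset.Icc i (n:ℤ), q ^ (j - i + (sE j a : ℤ)) •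
            mono x n (a + Pi.single (-j) 1 + Pi.single j 1) := by
  intro N
  induction N with
  | zero =>
    intro i hi a hμ
    have h1 : (n:ℤ) < i := by omega
    rw [Om_empty n q x h1, zero_mul,
      show Finset.Icc i (n:ℤ) = ∅ from Finset.Icc_eq_empty (by omega),
      Finset.sum_empty, smul_zero]
  | succ N IH =>
    intro i hi a hμ
    by_cases hin : (n:ℤ) < i
    · rw [Om_empty n q x hin, zero_mul,
        show Finset.Icc i (n:ℤ) = ∅ from Finset.Icc_eq_empty (by omega),
        Finset.sum_empty, smul_zero]
    push_neg at hin
    by_cases hdeg : (∑ l ∈ idxF n, a l) = 0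
    · -- base case : `a` vanishes on the index set
      have ha0 : ∀ l ∈ idxF n, a l = 0 := fun l hl => Finset.sum_eq_zero_iff.mp hdeg l hl
      have ha0' : ∀ l ∈ idxList n, a l = 0 := fun l hl =>
        ha0 l (mem_idxList_iff_idxF.mp hl)
      have hm1 : mono x n a = 1 := mono_one x n ha0'
      have hP : (∏ l ∈ Finset.Icc (-(n:ℤ)) (-i), q ^ (2 * a l)) = 1 := by
        apply Finset.prod_eq_one
        intro l hl
        obtain ⟨hl1, hl2⟩ := Finset.mem_Icc.mp hl
        rw [ha0 l (mem_idxF.mpr ⟨by omega, by omega, by omega⟩)]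
        norm_num
      rw [hm1, mul_one, hP, one_smul, Om]
      apply Finset.sum_congr rfl
      intro j hj
      obtain ⟨hj1, hj2⟩ := Finset.mem_Icc.mp hj
      have hs : sE j a = 0 := by
        apply Finset.sum_eq_zero
        intro l hl
        obtain ⟨hl0, hl1⟩ := Finset.mem_erase.mp hl
        obtain ⟨hl2, hl3⟩ := Finset.mem_Ioo.mp hl1
        exact ha0 l (mem_idxF.mpr ⟨hl0, by omega, by omega⟩)
      have hjL : j ∈ idxList n := mem_idxList.mpr ⟨by omega, by omega, by omega⟩
      have hjL' : -j ∈ idxList n := mem_idxList.mpr ⟨by omega, by omega, by omega⟩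
      have h1 : x j * mono x n a = mono x n (a + Pi.single j 1) :=
        mono_prepend x n hjL (fun l hl _ => ha0' l hl)
      have h2 : x (-j) * mono x n (a + Pi.single j 1)
          = mono x n ((a + Pi.single j 1) + Pi.single (-j) 1) := by
        apply mono_prepend x n hjL'
        intro l hl hlj
        have h3 : (Pi.single j 1 : ℤ → ℕ) l = 0 := by
          rw [Pi.single_apply, if_neg (by omega)]
        simp [ha0' l hl, h3]
      have hmono : mono x n (a + Pi.single (-j) 1 + Pi.single j 1) = x (-j) * x j := by
        rw [show (a + Pi.single (-j) 1 + Pi.single j 1 : ℤ → ℕ)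
            = ((a + Pi.single j 1) + Pi.single (-j) 1 : ℤ → ℕ) from by
          funext l; simp [Pi.add_apply]; ring]
        rw [← h2, ← h1, hm1, mul_one]
      rw [hmono, hs]
      norm_num
    · -- inductive case
      classical
      set S := (idxF n).filter (fun l => a l ≠ 0) with hSdef
      have hS : S.Nonempty := by
        by_contra hS
        rw [Finset.not_nonempty_iff_eq_empty] at hS
        apply hdeg
        apply Finset.sum_eq_zero
        intro l hl
        by_contra hbl
        have : l ∈ S := Finset.mem_filter.mpr ⟨hl, hbl⟩
        simp [hS] at this
      set m := S.min' hS with hmdef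
      have hmS : m ∈ S := Finset.min'_mem _ _
      obtain ⟨hmF, ham⟩ : m ∈ idxF n ∧ a m ≠ 0 := by
        have := Finset.mem_filter.mp hmS
        exact ⟨this.1, this.2⟩
      have hmL : m ∈ idxList n := mem_idxList_iff_idxF.mpr hmF
      obtain ⟨hm0, hmlow, hmhigh⟩ := mem_idxF.mp hmF
      have hmin : ∀ l ∈ idxList n, l < m → a l = 0 := by
        intro l hl hlr
        by_contra hbl
        have hlS : l ∈ S := Finset.mem_filter.mpr ⟨mem_idxList_iff_idxF.mp hl, hbl⟩
        have := Finset.min'_le S l hlS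
        omega
      set a' := Function.update a m (a m - 1) with ha'def
      have ha' : a = a' + Pi.single m 1 := by
        funext l
        by_cases hl : l = m
        · subst hl; simp [ha'def, Function.update_self]; omega
        · simp [ha'def, Function.update_of_ne hl, Pi.single_eq_of_ne hl]
      have ha'0 : ∀ l ∈ idxList n, l < m → a' l = 0 := by
        intro l hl hlr
        rw [ha'def, Function.update_of_ne (by omega)]
        exact hmin l hl hlr
      have ha'0F : ∀ l ∈ idxF n, l < m → a' l = 0 := fun l hl =>
        ha'0 l (mem_idxList_iff_idxF.mpr hl)
      have hpeel : mono x n a = x m * mono x n a' := by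
        rw [mono_prepend x n hmL ha'0, ← ha']
      have hdeg' : (∑ l ∈ idxF n, a' l) + 1 = ∑ l ∈ idxF n, a l := by
        conv_rhs => rw [ha']
        simp only [Pi.add_apply]
        rw [Finset.sum_add_distrib, Finset.sum_pi_single', if_pos hmF]
      have hIH1 : Om q x n i * mono x n a'
          = (∏ l ∈ Finset.Icc (-(n:ℤ)) (-i), q ^ (2 * a' l)) •
              ∑ j ∈ Finset.Icc i (n:ℤ), q ^ (j - i + (sE j a' : ℤ)) •
                mono x n (a' + Pi.single (-j) 1 + Pi.single j 1) := by
        apply IH i hi a'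
        have ht : (∑ l ∈ idxF n, a' l) * (n+1) + (n+1) = (∑ l ∈ idxF n, a l) * (n+1) := by
          rw [← hdeg']; ring
        omega
      -- common abbreviation for the swap computation
      have hswap : ∀ C : k, ∀ hbm : m < 0 ∨ (a' + Pi.single m 1 : ℤ → ℕ) (-m) = 0, True → True :=
        fun _ _ _ => trivial
      clear hswap
      -- three cases on the position of `m`
      rcases le_or_gt m (-i) with hc1 | hrest
      · -- case m ≤ -i
        have hOmx : Om q x n i * x m = (q^2) • (x m * Om q x n i) := by
          have h := Om_comm_neg n q x hq hrel1 hrel2 (p := -m) (by omega) (by omega)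
            ((-m) - i).toNat i (by omega) hi
          rw [neg_neg] at h
          exact h
        have hswap : ∀ j ∈ Finset.Icc i (n:ℤ),
            x m * mono x n (a' + Pi.single (-j) 1 + Pi.single j 1)
              = (q ^ (if -j < m then 1 else 0)) •
                  mono x n (a + Pi.single (-j) 1 + Pi.single j 1) := by
          intro j hj
          obtain ⟨hj1, hj2⟩ := Finset.mem_Icc.mp hj
          have hmono_eq : ((a' + Pi.single (-j) 1 + Pi.single j 1 : ℤ → ℕ)
              + Pi.single m 1 : ℤ → ℕ) = a + Pi.single (-j) 1 + Pi.single j 1 := by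
            rw [ha']; funext l; simp only [Pi.add_apply]; ring
          have hW : (∑ l ∈ (idxF n).filter (· < m),
              (a' + Pi.single (-j) 1 + Pi.single j 1 : ℤ → ℕ) l)
              = (if -j < m then 1 else 0) := by
            simp only [Pi.add_apply]
            rw [Finset.sum_add_distrib, Finset.sum_add_distrib,
              Finset.sum_pi_single', Finset.sum_pi_single']
            have hz : (∑ l ∈ (idxF n).filter (· < m), a' l) = 0 :=
              Finset.sum_eq_zero (fun l hl => by
                obtain ⟨hl1, hl2⟩ := Finset.mem_filter.mp hl
                exact ha'0F l hl1 (by simpa using hl2))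
            have hmemj : j ∉ (idxF n).filter (· < m) := by
              rw [Finset.mem_filter]
              rintro ⟨-, h⟩
              omega
            have hmemnegj : (-j ∈ (idxF n).filter (· < m)) ↔ (-j < m) := by
              rw [Finset.mem_filter]
              exact ⟨fun h => h.2, fun h => ⟨mem_idxF.mpr ⟨by omega, by omega, by omega⟩, h⟩⟩
            rw [hz, if_neg hmemj]
            by_cases hcc : -j < m
            · rw [if_pos (hmemnegj.mpr hcc), if_pos hcc]
              omega
            · rw [if_neg (fun h => hcc (hmemnegj.mp h)), if_neg hcc]
              omega
          rw [mul_mono_swap n q x hq hrel1 hmL _ (Or.inl (by omega)), hW, hmono_eq]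
        have hPa : (∏ l ∈ Finset.Icc (-(n:ℤ)) (-i), q ^ (2 * a l))
            = q^2 * ∏ l ∈ Finset.Icc (-(n:ℤ)) (-i), q ^ (2 * a' l) := by
          conv_lhs => rw [ha']
          rw [prod_pow_add_single q n i m a', if_pos (Finset.mem_Icc.mpr ⟨by omega, by omega⟩)]
        calc Om q x n i * mono x n a
            = (Om q x n i * x m) * mono x n a' := by rw [hpeel, ← mul_assoc]
          _ = (q^2) • (x m * (Om q x n i * mono x n a')) := by
              rw [hOmx, smul_mul_assoc, mul_assoc]
          _ = (q^2 * ∏ l ∈ Finset.Icc (-(n:ℤ)) (-i), q ^ (2 * a' l)) •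
                ∑ j ∈ Finset.Icc i (n:ℤ),
                  (q ^ (j - i + (sE j a' : ℤ)) * q ^ (if -j < m then 1 else 0)) •
                    mono x n (a + Pi.single (-j) 1 + Pi.single j 1) := by
              rw [hIH1, mul_smul_comm, Finset.mul_sum, smul_smul]
              congr 1
              apply Finset.sum_congr rfl
              intro j hj
              rw [mul_smul_comm, hswap j hj, smul_smul]
          _ = (∏ l ∈ Finset.Icc (-(n:ℤ)) (-i), q ^ (2 * a l)) •
              ∑ j ∈ Finset.Icc i (n:ℤ), q ^ (j - i + (sE j a : ℤ)) •
                mono x n (a + Pi.single (-j) 1 + Pi.single j 1) := by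
              rw [hPa]
              congr 1
              apply Finset.sum_congr rfl
              intro j hj
              obtain ⟨hj1, hj2⟩ := Finset.mem_Icc.mp hj
              congr 1
              have hsa : sE j a = sE j a' + (if -j < m then 1 else 0) := by
                conv_lhs => rw [ha']
                rw [sE_add_single]
                congr 1
                by_cases hcc : -j < m
                · rw [if_pos hcc, if_pos (show m ≠ 0 ∧ -j < m ∧ m < j by omega)]
                · rw [if_neg hcc, if_neg (show ¬(m ≠ 0 ∧ -j < m ∧ m < j) by omega)]
              rw [hsa]
              by_cases hcc : -j < m
              · rw [if_pos hcc, pow_one]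
                conv_rhs => rw [show j - i + ((sE j a' + 1 : ℕ) : ℤ)
                    = (j - i + (sE j a' : ℤ)) + 1 from by push_cast; ring]
                rw [zpow_add_one₀ hq]
              · rw [if_neg hcc, pow_zero, mul_one, add_zero]
      rcases lt_or_ge m i with hc2 | hc3
      · -- case -i < m < i
        have hOmx : Om q x n i * x m = x m * Om q x n i :=
          Om_comm_small n q x hrel1 hm0 hmlow hmhigh (by omega) (by omega)
        have hswap : ∀ j ∈ Finset.Icc i (n:ℤ),
            x m * mono x n (a' + Pi.single (-j) 1 + Pi.single j 1)
              = q • mono x n (a + Pi.single (-j) 1 + Pi.single j 1) := by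
          intro j hj
          obtain ⟨hj1, hj2⟩ := Finset.mem_Icc.mp hj
          have hmono_eq : ((a' + Pi.single (-j) 1 + Pi.single j 1 : ℤ → ℕ)
              + Pi.single m 1 : ℤ → ℕ) = a + Pi.single (-j) 1 + Pi.single j 1 := by
            rw [ha']; funext l; simp only [Pi.add_apply]; ring
          have hbm : m < 0 ∨ (a' + Pi.single (-j) 1 + Pi.single j 1 : ℤ → ℕ) (-m) = 0 := by
            rcases lt_or_gt_of_ne hm0 with h | h
            · exact Or.inl h
            · right
              have h1 : a' (-m) = 0 :=
                ha'0 (-m) (mem_idxList.mpr ⟨by omega, by omega, by omega⟩) (by omega)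
              have h2 : (Pi.single (-j) 1 : ℤ → ℕ) (-m) = 0 := by
                rw [Pi.single_apply, if_neg (by omega)]
              have h3 : (Pi.single j 1 : ℤ → ℕ) (-m) = 0 := by
                rw [Pi.single_apply, if_neg (by omega)]
              simp only [Pi.add_apply, h1, h2, h3]
          have hW : (∑ l ∈ (idxF n).filter (· < m),
              (a' + Pi.single (-j) 1 + Pi.single j 1 : ℤ → ℕ) l) = 1 := by
            simp only [Pi.add_apply]
            rw [Finset.sum_add_distrib, Finset.sum_add_distrib,
              Finset.sum_pi_single', Finset.sum_pi_single']
            have hz : (∑ l ∈ (idxF n).filter (· < m), a' l) = 0 :=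
              Finset.sum_eq_zero (fun l hl => by
                obtain ⟨hl1, hl2⟩ := Finset.mem_filter.mp hl
                exact ha'0F l hl1 (by simpa using hl2))
            have hmemj : j ∉ (idxF n).filter (· < m) := by
              rw [Finset.mem_filter]
              rintro ⟨-, h⟩
              omega
            have hmemnegj : -j ∈ (idxF n).filter (· < m) :=
              Finset.mem_filter.mpr ⟨mem_idxF.mpr ⟨by omega, by omega, by omega⟩, by omega⟩
            rw [hz, if_neg hmemj, if_pos hmemnegj]
            omega
          rw [mul_mono_swap n q x hq hrel1 hmL _ hbm, hW, hmono_eq, pow_one]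
        have hPa : (∏ l ∈ Finset.Icc (-(n:ℤ)) (-i), q ^ (2 * a l))
            = ∏ l ∈ Finset.Icc (-(n:ℤ)) (-i), q ^ (2 * a' l) := by
          conv_lhs => rw [ha']
          rw [prod_pow_add_single q n i m a',
            if_neg (by rw [Finset.mem_Icc]; omega), one_mul]
        calc Om q x n i * mono x n a
            = (Om q x n i * x m) * mono x n a' := by rw [hpeel, ← mul_assoc]
          _ = x m * (Om q x n i * mono x n a') := by rw [hOmx, mul_assoc]
          _ = (∏ l ∈ Finset.Icc (-(n:ℤ)) (-i), q ^ (2 * a' l)) •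
                ∑ j ∈ Finset.Icc i (n:ℤ),
                  (q ^ (j - i + (sE j a' : ℤ)) * q) •
                    mono x n (a + Pi.single (-j) 1 + Pi.single j 1) := by
              rw [hIH1, mul_smul_comm, Finset.mul_sum]
              congr 1
              apply Finset.sum_congr rfl
              intro j hj
              rw [mul_smul_comm, hswap j hj, smul_smul]
          _ = (∏ l ∈ Finset.Icc (-(n:ℤ)) (-i), q ^ (2 * a l)) •
              ∑ j ∈ Finset.Icc i (n:ℤ), q ^ (j - i + (sE j a : ℤ)) •
                mono x n (a + Pi.single (-j) 1 + Pi.single j 1) := by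
              rw [hPa]
              congr 1
              apply Finset.sum_congr rfl
              intro j hj
              obtain ⟨hj1, hj2⟩ := Finset.mem_Icc.mp hj
              congr 1
              have hsa : sE j a = sE j a' + 1 := by
                conv_lhs => rw [ha']
                rw [sE_add_single, if_pos (show m ≠ 0 ∧ -j < m ∧ m < j by omega)]
              rw [hsa, show j - i + ((sE j a' + 1 : ℕ) : ℤ)
                    = (j - i + (sE j a' : ℤ)) + 1 from by push_cast; ring,
                zpow_add_one₀ hq]
      · -- case i ≤ m
        have hq2 : (q:k)^2 ≠ 0 := pow_ne_zero 2 hq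
        have hnegmL : -m ∈ idxList n := mem_idxList.mpr ⟨by omega, by omega, by omega⟩
        have hcp := Om_comm_pos n q x hq hrel1 hrel2 (p := m) (by omega) (by omega)
          (m - i).toNat i (by omega) hi
        have hOmx : Om q x n i * x m = (q^2)⁻¹ • (x m * Om q x n i) := by
          rw [hcp, smul_smul, inv_mul_cancel₀ hq2, one_smul]
        have hP'1 : (∏ l ∈ Finset.Icc (-(n:ℤ)) (-i), q ^ (2 * a' l)) = 1 := by
          apply Finset.prod_eq_one
          intro l hl
          obtain ⟨hl1, hl2⟩ := Finset.mem_Icc.mp hl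
          rw [ha'0F l (mem_idxF.mpr ⟨by omega, by omega, by omega⟩) (by omega)]
          norm_num
        have hPa1 : (∏ l ∈ Finset.Icc (-(n:ℤ)) (-i), q ^ (2 * a l)) = 1 := by
          apply Finset.prod_eq_one
          intro l hl
          obtain ⟨hl1, hl2⟩ := Finset.mem_Icc.mp hl
          rw [hmin l (mem_idxList.mpr ⟨by omega, by omega, by omega⟩) (by omega)]
          norm_num
        have hsplit : Finset.Icc i (n:ℤ)
            = insert m (Finset.Icc i (m-1) ∪ Finset.Icc (m+1) (n:ℤ)) := by
          ext t
          simp only [Finset.mem_insert, Finset.mem_union, Finset.mem_Icc]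
          omega
        have hnotin : m ∉ Finset.Icc i (m-1) ∪ Finset.Icc (m+1) (n:ℤ) := by
          simp only [Finset.mem_union, Finset.mem_Icc]
          omega
        have hdisj : Disjoint (Finset.Icc i (m-1)) (Finset.Icc (m+1) (n:ℤ)) := by
          rw [Finset.disjoint_left]
          intro t h1 h2
          rw [Finset.mem_Icc] at h1 h2
          omega
        have hswapT : ∀ j ∈ Finset.Icc i (m-1) ∪ Finset.Icc (m+1) (n:ℤ),
            x m * mono x n (a' + Pi.single (-j) 1 + Pi.single j 1)
              = (q ^ (if j < m then 2 else 1)) •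
                  mono x n (a + Pi.single (-j) 1 + Pi.single j 1) := by
          intro j hj
          have hjb : (i ≤ j ∧ j ≤ m - 1) ∨ (m+1 ≤ j ∧ j ≤ (n:ℤ)) := by
            rcases Finset.mem_union.mp hj with h1 | h2
            · exact Or.inl (Finset.mem_Icc.mp h1)
            · exact Or.inr (Finset.mem_Icc.mp h2)
          have hmono_eq : ((a' + Pi.single (-j) 1 + Pi.single j 1 : ℤ → ℕ)
              + Pi.single m 1 : ℤ → ℕ) = a + Pi.single (-j) 1 + Pi.single j 1 := by
            rw [ha']; funext l; simp only [Pi.add_apply]; ring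
          have hbm : m < 0 ∨ (a' + Pi.single (-j) 1 + Pi.single j 1 : ℤ → ℕ) (-m) = 0 := by
            right
            have h1 : a' (-m) = 0 := ha'0 (-m) hnegmL (by omega)
            have h2 : (Pi.single (-j) 1 : ℤ → ℕ) (-m) = 0 := by
              rw [Pi.single_apply, if_neg (by omega)]
            have h3 : (Pi.single j 1 : ℤ → ℕ) (-m) = 0 := by
              rw [Pi.single_apply, if_neg (by omega)]
            simp only [Pi.add_apply, h1, h2, h3]
          have hW : (∑ l ∈ (idxF n).filter (· < m),
              (a' + Pi.single (-j) 1 + Pi.single j 1 : ℤ → ℕ) l)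
              = (if j < m then 2 else 1) := by
            simp only [Pi.add_apply]
            rw [Finset.sum_add_distrib, Finset.sum_add_distrib,
              Finset.sum_pi_single', Finset.sum_pi_single']
            have hz : (∑ l ∈ (idxF n).filter (· < m), a' l) = 0 :=
              Finset.sum_eq_zero (fun l hl => by
                obtain ⟨hl1, hl2⟩ := Finset.mem_filter.mp hl
                exact ha'0F l hl1 (by simpa using hl2))
            have hmemnegj : -j ∈ (idxF n).filter (· < m) :=
              Finset.mem_filter.mpr ⟨mem_idxF.mpr ⟨by omega, by omega, by omega⟩, by omega⟩
            have hmemj : j ∈ (idxF n).filter (· < m) ↔ j < m := by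
              rw [Finset.mem_filter]
              exact ⟨fun h => h.2, fun h => ⟨mem_idxF.mpr ⟨by omega, by omega, by omega⟩, h⟩⟩
            rw [hz, if_pos hmemnegj]
            by_cases hcc : j < m
            · rw [if_pos (hmemj.mpr hcc), if_pos hcc]
            · rw [if_neg (fun hh => hcc (hmemj.mp hh)), if_neg hcc]
              omega
          rw [mul_mono_swap n q x hq hrel1 hmL _ hbm, hW, hmono_eq]
        have hsEm : sE m a = sE m a' := by
          conv_lhs => rw [ha']
          rw [sE_add_single, if_neg (by omega : ¬(m ≠ 0 ∧ -m < m ∧ m < m)), add_zero]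
        have hsm0 : sE m a' = 0 := by
          apply Finset.sum_eq_zero
          intro l hl
          obtain ⟨hl0, hlI⟩ := Finset.mem_erase.mp hl
          obtain ⟨hl1, hl2⟩ := Finset.mem_Ioo.mp hlI
          exact ha'0F l (mem_idxF.mpr ⟨hl0, by omega, by omega⟩) (by omega)
        have hIH2 : Om q x n (m+1) * mono x n a
            = (∏ l ∈ Finset.Icc (-(n:ℤ)) (-(m+1)), q ^ (2 * a l)) •
                ∑ j ∈ Finset.Icc (m+1) (n:ℤ), q ^ (j - (m+1) + (sE j a : ℤ)) •
                  mono x n (a + Pi.single (-j) 1 + Pi.single j 1) := by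
          apply IH (m+1) (by omega) a
          omega
        have hPm1 : (∏ l ∈ Finset.Icc (-(n:ℤ)) (-(m+1)), q ^ (2 * a l)) = 1 := by
          apply Finset.prod_eq_one
          intro l hl
          obtain ⟨hl1, hl2⟩ := Finset.mem_Icc.mp hl
          rw [hmin l (mem_idxList.mpr ⟨by omega, by omega, by omega⟩) (by omega)]
          norm_num
        have hxmam : x m * mono x n a = mono x n (a + Pi.single m 1) :=
          mono_prepend x n hmL hmin
        have hxmxm : x (-m) * mono x n (a + Pi.single m 1)
            = mono x n ((a + Pi.single m 1) + Pi.single (-m) 1) := by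
          apply mono_prepend x n hnegmL
          intro l hl hlm
          have h2 : (Pi.single m 1 : ℤ → ℕ) l = 0 := by
            rw [Pi.single_apply, if_neg (by omega)]
          simp only [Pi.add_apply, hmin l hl (by omega), h2]
        have hXm0 : mono x n (a' + Pi.single (-m) 1 + Pi.single m 1)
            = x (-m) * mono x n a := by
          rw [show (a' + Pi.single (-m) 1 + Pi.single m 1 : ℤ → ℕ)
              = (a + Pi.single (-m) 1 : ℤ → ℕ) from by
            rw [ha']; funext l; simp only [Pi.add_apply]; ring]
          rw [← mono_prepend x n hnegmL (fun l hl hlm => hmin l hl (by omega))]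
        have hjm : x m * mono x n (a' + Pi.single (-m) 1 + Pi.single m 1)
            = (q^2) • mono x n (a + Pi.single (-m) 1 + Pi.single m 1)
              + (q^2*(q-q⁻¹)) • ∑ j ∈ Finset.Icc (m+1) (n:ℤ),
                  q ^ (j - (m+1) + (sE j a : ℤ)) •
                    mono x n (a + Pi.single (-j) 1 + Pi.single j 1) := by
          rw [hXm0, ← mul_assoc, hrel2 m (by omega) (by omega), add_mul,
            smul_mul_assoc, smul_mul_assoc, mul_assoc, hxmam, hxmxm, hIH2, hPm1, one_smul]
          congr 2
          apply mono_congr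
          intro l _
          simp only [Pi.add_apply]
          ring
        have hB : (∑ j ∈ Finset.Icc i (m-1), q ^ (j - i + (sE j a' : ℤ)) •
              (x m * mono x n (a' + Pi.single (-j) 1 + Pi.single j 1)))
            = ∑ j ∈ Finset.Icc i (m-1), (q^2 * q ^ (j - i + (sE j a : ℤ))) •
                mono x n (a + Pi.single (-j) 1 + Pi.single j 1) := by
          apply Finset.sum_congr rfl
          intro j hj
          obtain ⟨hj1, hj2⟩ := Finset.mem_Icc.mp hj
          have hsj : sE j a = sE j a' := by
            conv_lhs => rw [ha']
            rw [sE_add_single, if_neg (by omega), add_zero]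
          have hscal : q ^ (j - i + (sE j a' : ℤ)) * q ^ (if j < m then 2 else 1)
              = q^2 * q ^ (j - i + (sE j a : ℤ)) := by
            rw [if_pos (by omega), hsj]
            ring
          rw [hswapT j (Finset.mem_union_left _ hj), smul_smul, hscal]
        have hC : (∑ j ∈ Finset.Icc (m+1) (n:ℤ), q ^ (j - i + (sE j a' : ℤ)) •
              (x m * mono x n (a' + Pi.single (-j) 1 + Pi.single j 1)))
            = ∑ j ∈ Finset.Icc (m+1) (n:ℤ),
                ((q^2 * q ^ (j - i + (sE j a : ℤ)))
                  - q ^ (m - i + (sE m a' : ℤ)) * ((q^2*(q-q⁻¹)) * q ^ (j - (m+1) + (sE j a : ℤ)))) •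
                  mono x n (a + Pi.single (-j) 1 + Pi.single j 1) := by
          apply Finset.sum_congr rfl
          intro j hj
          obtain ⟨hj1, hj2⟩ := Finset.mem_Icc.mp hj
          have hsj : sE j a = sE j a' + 1 := by
            conv_lhs => rw [ha']
            rw [sE_add_single, if_pos (show m ≠ 0 ∧ -j < m ∧ m < j by omega)]
          have e1 : q ^ (j - i + ((sE j a' + 1 : ℕ) : ℤ))
              = q ^ (j - i + (sE j a' : ℤ)) * q := by
            rw [show j - i + ((sE j a' + 1 : ℕ):ℤ) = (j - i + (sE j a' :ℤ)) + 1 from by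
              push_cast; ring, zpow_add_one₀ hq]
          have e2 : q ^ (m - i + ((0:ℕ):ℤ)) = q ^ (m - i) := by norm_num
          have e3 : q ^ (j - (m+1) + ((sE j a' + 1 : ℕ):ℤ)) = q ^ (j - m + (sE j a' : ℤ)) := by
            rw [show j - (m+1) + ((sE j a' + 1 : ℕ):ℤ) = j - m + (sE j a' :ℤ) from by
              push_cast; ring]
          have e4 : q ^ (j - i + (sE j a' : ℤ)) = q ^ (m - i) * q ^ (j - m + (sE j a' : ℤ)) := by
            rw [← zpow_add₀ hq, show m - i + (j - m + (sE j a' :ℤ)) = j - i + (sE j a' : ℤ) from by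
              ring]
          have hscal : q ^ (j - i + (sE j a' : ℤ)) * q ^ (if j < m then 2 else 1)
              = (q^2 * q ^ (j - i + (sE j a : ℤ)))
                - q ^ (m - i + (sE m a' : ℤ)) * ((q^2*(q-q⁻¹)) * q ^ (j - (m+1) + (sE j a : ℤ))) := by
            rw [if_neg (by omega), pow_one, hsj, hsm0, e1, e2, e3, e4]
            field_simp
            ring
          rw [hswapT j (Finset.mem_union_right _ hj), smul_smul, hscal]
        calc Om q x n i * mono x n a
            = (Om q x n i * x m) * mono x n a' := by rw [hpeel, ← mul_assoc]
          _ = (q^2)⁻¹ • (x m * (Om q x n i * mono x n a')) := by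
              rw [hOmx, smul_mul_assoc, mul_assoc]
          _ = (q^2)⁻¹ • ∑ j ∈ Finset.Icc i (n:ℤ), q ^ (j - i + (sE j a' : ℤ)) •
                (x m * mono x n (a' + Pi.single (-j) 1 + Pi.single j 1)) := by
              rw [hIH1, hP'1, one_smul, Finset.mul_sum]
              congr 1
              apply Finset.sum_congr rfl
              intro j hj
              rw [mul_smul_comm]
          _ = (q^2)⁻¹ • ∑ j ∈ Finset.Icc i (n:ℤ), (q^2 * q ^ (j - i + (sE j a : ℤ))) •
                mono x n (a + Pi.single (-j) 1 + Pi.single j 1) := by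
              congr 1
              rw [hsplit, Finset.sum_insert hnotin, Finset.sum_insert hnotin,
                Finset.sum_union hdisj, Finset.sum_union hdisj, hjm, hB, hC]
              rw [hsEm]
              simp only [smul_add, smul_smul, Finset.smul_sum, sub_smul,
                Finset.sum_sub_distrib]
              rw [mul_comm (q^2) (q ^ (m - i + (sE m a' : ℤ)))]
              abel
          _ = (∏ l ∈ Finset.Icc (-(n:ℤ)) (-i), q ^ (2 * a l)) •
              ∑ j ∈ Finset.Icc i (n:ℤ), q ^ (j - i + (sE j a : ℤ)) •
                mono x n (a + Pi.single (-j) 1 + Pi.single j 1) := by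
              rw [hPa1, one_smul, Finset.smul_sum]
              apply Finset.sum_congr rfl
              intro j hj
              rw [smul_smul, inv_mul_cancel_left₀ hq2]
end Main

/-- `Ω_i x^a = (∏_{l=-n}^{-i} q^{2a_l}) Σ_{j=i}^{n} q^{j-i+s_j(a)} x^{a+ε_{-j}+ε_j}`. -/
theorem stmt7 {k X : Type*} [Field k] [CharZero k] [Ring X] [Algebra k X]
    (n : ℕ) (hn : 2 ≤ n) (q : k) (hq : q ≠ 0) (hroot : ∀ r : ℕ, r ≠ 0 → q ^ r ≠ 1)
    (x : ℤ → X)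
    (hrel1 : ∀ i j : ℤ, -(n : ℤ) ≤ i → j ≤ n → i ≠ 0 → j ≠ 0 → i < j → j ≠ -i →
      x j * x i = q • (x i * x j))
    (hrel2 : ∀ i : ℤ, 1 ≤ i → i ≤ n →
      x i * x (-i) = (q ^ 2) • (x (-i) * x i) + (q ^ 2 * (q - q⁻¹)) • Om q x n (i + 1)) :
    ∀ i : ℤ, 1 ≤ i → i ≤ n → ∀ a : ℤ → ℕ, a 0 = 0 →
      Om q x n i * mono x n a
        = (∏ l ∈ Finset.Icc (-(n : ℤ)) (-i), q ^ (2 * a l)) •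
            ∑ j ∈ Finset.Icc i (n : ℤ),
              q ^ (j - i + (sE j a : ℤ)) •
                mono x n (a + Pi.single (-j) 1 + Pi.single j 1) := by
  intro i hi1 hi2 a ha0
  exact main_lemma n q x hq hrel1 hrel2
    ((∑ l ∈ idxF n, a l) * (n+1) + ((n:ℤ)+1-i).toNat) i hi1 a le_rfl
end
end
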